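/- arXiv:1210.3696 — 4 statements merged into one kernel-verified Lean document; each statement's English description precedes it below -/
import Mathlib

section
/- For ordinals ξ and ζ with 0 < ζ ≤ ξ and ω ≤ ξ, the Banach space C₀([0, ξ·ζ]) is isomorphic (as a Banach space, i.e., linearly homeomorphic) to the direct sum C₀([0, ζ]) ⊕ c₀(ζ, C₀([0, ξ])). -/
set_option synthInstance.maxHeartbeats 1000000
set_option maxHeartbeats 1000000

noncomputable section

open Ordinal Set Metric

/-- The compact ordinal interval `[0, α]`. -/
instance ordIicCompact (α : Ordinal) : CompactSpace (Set.Iic α) := by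
  rw [← isCompact_iff_compactSpace, ← Set.Icc_bot]
  exact isCompact_Icc

/-- `C₀([0, α])`: continuous functions on `[0, α]` vanishing at `α`, as a submodule. -/
def CzeroSub (α : Ordinal) : Submodule ℝ C(Set.Iic α, ℝ) where
  carrier := {f | f ⟨α, Set.self_mem_Iic⟩ = 0}
  add_mem' := by intro f g hf hg; simp only [Set.mem_setOf_eq] at *; simp [hf, hg]
  zero_mem' := rfl
  smul_mem' := by intro c f hf; simp only [Set.mem_setOf_eq] at *; simp [hf]

/-- The Banach space `C₀([0, α])`. -/
abbrev Czero (α : Ordinal) := ↥(CzeroSub α)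

/-- `c₀(S, X)` as a submodule of `ℓ∞(S, X)`. -/
def czeroSub (S : Type*) (X : Type*) [NormedAddCommGroup X] [NormedSpace ℝ X] :
    Submodule ℝ (lp (fun _ : S => X) ⊤) where
  carrier := {f | ∀ ε : ℝ, 0 < ε → {s : S | ε < ‖(f : ∀ _ : S, X) s‖}.Finite}
  add_mem' := by
    intro f g hf hg ε hε
    refine ((hf (ε/2) (by linarith)).union (hg (ε/2) (by linarith))).subset ?_
    intro s hs
    simp only [Set.mem_setOf_eq, Set.mem_union] at *
    by_contra hc
    push_neg at hc
    have := norm_add_le ((f : ∀ _ : S, X) s) ((g : ∀ _ : S, X) s)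
    simp only [lp.coeFn_add, Pi.add_apply] at hs
    linarith [hc.1, hc.2]
  zero_mem' := by
    intro ε hε
    convert Set.finite_empty
    ext s; simp [hε.not_gt, le_of_lt hε]
  smul_mem' := by
    intro c f hf ε hε
    rcases eq_or_ne c 0 with rfl | hc
    · convert Set.finite_empty
      ext s; simp [hε.not_gt, le_of_lt hε]
    · refine (hf (ε / ‖c‖) (div_pos hε (norm_pos_iff.2 hc))).subset ?_
      intro s hs
      simp only [Set.mem_setOf_eq, lp.coeFn_smul, Pi.smul_apply, norm_smul] at *
      exact (div_lt_iff₀ (norm_pos_iff.2 hc)).2 (by rw [mul_comm]; exact hs)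

/-- The Banach space `c₀(S, X)`. -/
abbrev czero (S : Type*) (X : Type*) [NormedAddCommGroup X] [NormedSpace ℝ X] :=
  ↥(czeroSub S X)

instance (α : Ordinal) : NormedAddCommGroup (Czero α) := inferInstance
instance (α : Ordinal) : NormedSpace ℝ (Czero α) := inferInstance
instance (S : Type*) (X : Type*) [NormedAddCommGroup X] [NormedSpace ℝ X] :
    NormedAddCommGroup (czero S X) := inferInstance
instance (S : Type*) (X : Type*) [NormedAddCommGroup X] [NormedSpace ℝ X] :
    NormedSpace ℝ (czero S X) := inferInstance

section Szlenk

variable (X : Type*) [NormedAddCommGroup X] [NormedSpace ℝ X]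

open NormedSpace

/-- A set of functionals is weak-star open if it is open in the weak-star topology. -/
def IsWstarOpen (V : Set (StrongDual ℝ X)) : Prop :=
  IsOpen (StrongDual.toWeakDual '' V : Set (WeakDual ℝ X))

/-- The ε-Szlenk derivation. -/
def szDeriv (ε : ℝ) (B : Set (StrongDual ℝ X)) : Set (StrongDual ℝ X) :=
  {x ∈ B | ∀ V : Set (StrongDual ℝ X), IsWstarOpen X V → x ∈ V → ε < Metric.diam (B ∩ V)}

/-- Transfinite iterates of the ε-Szlenk derivation. -/
def szIter (ε : ℝ) (B : Set (StrongDual ℝ X)) (β : Ordinal.{0}) : Set (StrongDual ℝ X) :=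
  Ordinal.limitRecOn β B (fun _ ih => szDeriv X ε ih)
    (fun β _ ih => ⋂ (σ : Ordinal.{0}) (h : σ < β), ih σ h)

/-- The ε-Szlenk index `Sz(X, ε)`. -/
def SzE (ε : ℝ) : Ordinal :=
  sInf {β | szIter X ε (Metric.closedBall (0 : StrongDual ℝ X) 1) β = ∅}

/-- `X` has a (well-defined) Szlenk index. -/
def SzDefined : Prop :=
  ∀ ε : ℝ, 0 < ε → ∃ β : Ordinal, szIter X ε (Metric.closedBall (0 : StrongDual ℝ X) 1) β = ∅

/-- The Szlenk index `Sz(X)`. -/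
def Sz : Ordinal := ⨆ ε : {ε : ℝ // 0 < ε}, SzE X ε

/-- A weak-star slice. -/
def wstarSlice (x : X) (t : ℝ) : Set (StrongDual ℝ X) := {x' | t < x' x}

/-- The ε-dentability derivation. -/
def dzDeriv (ε : ℝ) (B : Set (StrongDual ℝ X)) : Set (StrongDual ℝ X) :=
  {x' ∈ B | ∀ (x : X) (t : ℝ), x' ∈ wstarSlice X x t → ε < Metric.diam (B ∩ wstarSlice X x t)}

/-- Transfinite iterates of the ε-dentability derivation. -/
def dzIter (ε : ℝ) (B : Set (StrongDual ℝ X)) (β : Ordinal.{0}) : Set (StrongDual ℝ X) :=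
  Ordinal.limitRecOn β B (fun _ ih => dzDeriv X ε ih)
    (fun β _ ih => ⋂ (σ : Ordinal.{0}) (h : σ < β), ih σ h)

/-- The ε-w*-dentability index `Dz(X, ε)`. -/
def DzE (ε : ℝ) : Ordinal :=
  sInf {β | dzIter X ε (Metric.closedBall (0 : StrongDual ℝ X) 1) β = ∅}

/-- The w*-dentability index `Dz(X)`. -/
def Dz : Ordinal := ⨆ ε : {ε : ℝ // 0 < ε}, DzE X ε

end Szlenk


namespace OrdAux
open Filter Topology

lemma nhds_basis_Iic {A x : Ordinal} (hx : x ≤ A) (h0 : x ≠ 0) :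
    (𝓝 (⟨x, hx⟩ : Set.Iic A)).HasBasis (· < x)
      (fun δ => (Subtype.val ⁻¹' Set.Ioc δ x : Set (Set.Iic A))) := by
  rw [nhds_subtype]
  exact (SuccOrder.hasBasis_nhds_Ioc_of_exists_lt ⟨0, pos_iff_ne_zero.2 h0⟩).comap _

lemma nhds_pure {A x : Ordinal} (hx : x ≤ A) (h : ¬ (Order.IsSuccLimit x)) :
    𝓝 (⟨x, hx⟩ : Set.Iic A) = pure ⟨x, hx⟩ := by
  rw [nhds_subtype, Ordinal.nhds_eq_pure.2 h, Filter.comap_pure]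
  have : (Subtype.val ⁻¹' {x} : Set (Set.Iic A)) = {⟨x, hx⟩} := by
    ext y; simp [Subtype.ext_iff]
  rw [this, Filter.principal_singleton]

lemma continuousAt_of_not_isLimit {A x : Ordinal} {Y : Type*} [TopologicalSpace Y]
    (F : Set.Iic A → Y) (hx : x ≤ A) (h : ¬ (Order.IsSuccLimit x)) : ContinuousAt F ⟨x, hx⟩ := by
  unfold ContinuousAt
  rw [nhds_pure hx h]
  exact tendsto_pure_nhds F _

lemma continuousAt_limit_iff {A x : Ordinal} {Y : Type*} [PseudoMetricSpace Y]
    (F : Set.Iic A → Y) (hx : x ≤ A) (h : (Order.IsSuccLimit x)) :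
    ContinuousAt F ⟨x, hx⟩ ↔ ∀ ε > 0, ∃ δ < x, ∀ y (hy : y ≤ A), δ < y → y ≤ x →
      dist (F ⟨y, hy⟩) (F ⟨x, hx⟩) < ε := by
  rw [ContinuousAt, (nhds_basis_Iic hx h.pos.ne').tendsto_iff Metric.nhds_basis_ball]
  constructor
  · intro H ε hε
    obtain ⟨δ, hδ, hH⟩ := H ε hε
    exact ⟨δ, hδ, fun y hy h1 h2 => hH ⟨y, hy⟩ ⟨h1, h2⟩⟩
  · intro H ε hε
    obtain ⟨δ, hδ, hH⟩ := H ε hε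
    exact ⟨δ, hδ, fun y hy => hH y.1 y.2 hy.1 hy.2⟩

variable {ξ ζ : Ordinal}

lemma one_add_le_add_one (z : Ordinal) : 1 + z ≤ z + 1 := by
  rcases lt_or_ge z ω with hz | hz
  · obtain ⟨n, rfl⟩ := Ordinal.lt_omega0.1 hz
    rw [← Nat.cast_one, ← Nat.cast_add, ← Nat.cast_add, Nat.add_comm]
  · rw [Ordinal.one_add_of_omega0_le hz]; exact le_self_add

lemma sub_one_mem {δ'' s : Ordinal} (h : δ'' + 1 < s) : δ'' < s - 1 := by
  have h2 : 1 + (δ'' + 1) ≤ s := le_trans (one_add_le_add_one _) ((Order.add_one_le_of_lt h))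
  calc δ'' < δ'' + 1 := lt_add_one δ''
    _ ≤ s - 1 := Ordinal.le_sub_of_add_le h2

lemma blk_le (hξ : ω ≤ ξ) {q r : Ordinal} (hq : q < ζ) (hr : r ≤ ξ) :
    ξ * q + 1 + r ≤ ξ * ζ := by
  rw [add_assoc]
  calc ξ * q + (1 + r) ≤ ξ * q + (1 + ξ) := add_le_add_right (add_le_add_right hr 1) _
    _ = ξ * q + ξ := by rw [Ordinal.one_add_of_omega0_le hξ]
    _ = ξ * (Order.succ q) := by rw [Ordinal.mul_succ]
    _ ≤ ξ * ζ := mul_le_mul_right (Order.succ_le_of_lt hq) ξ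

/-- `q ↦ ξ * q` as a map `[0,ζ] → [0,ξζ]`. -/
def mzeta (ξ ζ : Ordinal) : Set.Iic ζ → Set.Iic (ξ * ζ) :=
  fun q => ⟨ξ * q.1, mul_le_mul_right q.2 ξ⟩

lemma continuous_mzeta (hξ : ω ≤ ξ) : Continuous (mzeta ξ ζ) := by
  rw [continuous_iff_continuousAt]
  rintro ⟨q, hq⟩
  rcases em (Order.IsSuccLimit q) with hlim | hlim
  swap
  · exact continuousAt_of_not_isLimit _ _ hlim
  · have hξ0 : (0:Ordinal) < ξ := omega0_pos.trans_le hξ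
    have hlim2 : (Order.IsSuccLimit (ξ * q)) := isSuccLimit_mul_right hξ0 hlim
    refine ((nhds_basis_Iic hq hlim.pos.ne').tendsto_iff
      (nhds_basis_Iic (mul_le_mul_right hq ξ) hlim2.pos.ne')).2 ?_
    intro δ' hδ'
    obtain ⟨p, hp, hδp⟩ := (lt_mul_iff_of_isSuccLimit hlim).1 hδ'
    refine ⟨p, hp, ?_⟩
    rintro ⟨y, hy⟩ ⟨h1, h2⟩
    exact ⟨hδp.trans_le (mul_le_mul_right h1.le ξ), mul_le_mul_right h2 ξ⟩

/-- `r ↦ ξ*q + 1 + r` as a map `[0,ξ] → [0,ξζ]`. -/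
def mblk (ξ ζ : Ordinal) (hξ : ω ≤ ξ) (q : Ordinal) (hq : q < ζ) :
    Set.Iic ξ → Set.Iic (ξ * ζ) :=
  fun r => ⟨ξ * q + 1 + r.1, blk_le hξ hq r.2⟩

lemma continuous_mblk (hξ : ω ≤ ξ) (q : Ordinal) (hq : q < ζ) :
    Continuous (mblk ξ ζ hξ q hq) := by
  rw [continuous_iff_continuousAt]
  rintro ⟨r, hr⟩
  rcases em (Order.IsSuccLimit r) with hlim | hlim
  swap
  · exact continuousAt_of_not_isLimit _ _ hlim
  · have hlim2 : (Order.IsSuccLimit (ξ * q + 1 + r)) := by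
      rw [add_assoc]; exact isSuccLimit_add _ (by
        rw [Ordinal.one_add_of_omega0_le (omega0_le_of_isSuccLimit hlim)]; exact hlim)
    refine ((nhds_basis_Iic hr hlim.pos.ne').tendsto_iff
      (nhds_basis_Iic (blk_le hξ hq hr) hlim2.pos.ne')).2 ?_
    intro δ' hδ'
    rcases lt_or_ge δ' (ξ * q + 1) with hc | hc
    · refine ⟨0, hlim.pos, ?_⟩
      rintro ⟨y, hy⟩ ⟨h1, h2⟩
      refine ⟨hc.trans_le ?_, add_le_add_right h2 _⟩
      exact le_self_add
    · set d := δ' - (ξ * q + 1) with hd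
      have hδd : ξ * q + 1 + d = δ' := Ordinal.add_sub_cancel_of_le hc
      have hdr : d < r := by
        have := hδ'
        rw [← hδd] at this
        exact (add_lt_add_iff_left _).1 this
      refine ⟨d + 1, by rw [Ordinal.add_one_eq_succ]; exact hlim.succ_lt hdr, ?_⟩
      rintro ⟨y, hy⟩ ⟨h1, h2⟩
      constructor
      · rw [← hδd]
        exact add_lt_add_right (lt_of_le_of_lt (le_self_add) h1) _
      · exact add_le_add_right h2 _

section Forward
variable (ξ ζ : Ordinal)

lemma succ_mem_Iic {q : Ordinal} (hq : q < ζ) : q + 1 ≤ ζ := by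
  rw [Ordinal.add_one_eq_succ]; exact Order.succ_le_of_lt hq

lemma blk_top (hξ : ω ≤ ξ) (q : Ordinal) : ξ * q + 1 + ξ = ξ * (q + 1) := by
  rw [add_assoc, Ordinal.one_add_of_omega0_le hξ, mul_add, mul_one]

/-- The `g` component of the forward map. -/
def gmap (hξ : ω ≤ ξ) (f : C(Set.Iic (ξ * ζ), ℝ)) : C(Set.Iic ζ, ℝ) :=
  f.comp ⟨mzeta ξ ζ, continuous_mzeta hξ⟩

/-- The `h` component of the forward map. -/
def hmap (hξ : ω ≤ ξ) (q : Ordinal) (hq : q < ζ) (f : C(Set.Iic (ξ * ζ), ℝ)) :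
    C(Set.Iic ξ, ℝ) :=
  f.comp ⟨mblk ξ ζ hξ q hq, continuous_mblk hξ q hq⟩ -
    ContinuousMap.const _ (f (mzeta ξ ζ ⟨q + 1, succ_mem_Iic ζ hq⟩))

lemma gmap_apply (hξ : ω ≤ ξ) (f : C(Set.Iic (ξ * ζ), ℝ)) (q : Set.Iic ζ) :
    gmap ξ ζ hξ f q = f ⟨ξ * q.1, mul_le_mul_right q.2 ξ⟩ := by
  simp only [gmap, ContinuousMap.comp_apply, ContinuousMap.coe_mk]; rfl

lemma hmap_apply (hξ : ω ≤ ξ) (q : Ordinal) (hq : q < ζ) (f : C(Set.Iic (ξ * ζ), ℝ))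
    (r : Set.Iic ξ) :
    hmap ξ ζ hξ q hq f r = f ⟨ξ * q + 1 + r.1, blk_le hξ hq r.2⟩ -
      f ⟨ξ * (q + 1), mul_le_mul_right (succ_mem_Iic ζ hq) ξ⟩ := by
  simp only [hmap, ContinuousMap.sub_apply, ContinuousMap.comp_apply, ContinuousMap.coe_mk,
    ContinuousMap.const_apply]; rfl

lemma hmap_top (hξ : ω ≤ ξ) (q : Ordinal) (hq : q < ζ) (f : C(Set.Iic (ξ * ζ), ℝ)) :
    hmap ξ ζ hξ q hq f ⟨ξ, Set.self_mem_Iic⟩ = 0 := by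
  rw [hmap_apply]
  have : (⟨ξ * q + 1 + ξ, blk_le hξ hq le_rfl⟩ : Set.Iic (ξ * ζ)) =
      ⟨ξ * (q + 1), mul_le_mul_right (succ_mem_Iic ζ hq) ξ⟩ := by
    exact Subtype.ext (blk_top ξ hξ q)
  rw [this, _root_.sub_self]

lemma hmap_norm_le (hξ : ω ≤ ξ) (q : Ordinal) (hq : q < ζ) (f : C(Set.Iic (ξ * ζ), ℝ)) :
    ‖hmap ξ ζ hξ q hq f‖ ≤ 2 * ‖f‖ := by
  refine (ContinuousMap.norm_le _ (by positivity)).2 fun r => ?_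
  rw [hmap_apply]
  calc ‖f _ - f _‖ ≤ ‖f _‖ + ‖f _‖ := norm_sub_le _ _
    _ ≤ ‖f‖ + ‖f‖ := add_le_add (f.norm_coe_le_norm _) (f.norm_coe_le_norm _)
    _ = 2 * ‖f‖ := by ring

/-- Key finiteness: only finitely many blocks have large oscillation. -/
lemma hmap_finite (hξ : ω ≤ ξ) (f : C(Set.Iic (ξ * ζ), ℝ)) {ε : ℝ} (hε : 0 < ε) :
    {q : Ordinal | ∃ hq : q < ζ, ε < ‖hmap ξ ζ hξ q hq f‖}.Finite := by
  have hξ0 : (0:Ordinal) < ξ := omega0_pos.trans_le hξ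
  by_contra hinf
  rw [← Set.not_infinite, not_not] at hinf
  set T := {q : Ordinal | ∃ hq : q < ζ, ε < ‖hmap ξ ζ hξ q hq f‖} with hT
  have hTζ : T ⊆ Set.Iic ζ := fun q hq => hq.1.le
  have hMne : (Set.Nonempty {b : Ordinal | (T ∩ Set.Iic b).Infinite}) :=
    ⟨ζ, show (T ∩ Set.Iic ζ).Infinite by rwa [Set.inter_eq_self_of_subset_left hTζ]⟩
  set qs := sInf {b : Ordinal | (T ∩ Set.Iic b).Infinite} with hqs
  have hqsM : (T ∩ Set.Iic qs).Infinite := by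
    have h := _root_.csInf_mem (s := {b : Ordinal | (T ∩ Set.Iic b).Infinite}) hMne
    exact h
  have hqsζ : qs ≤ ζ := csInf_le' (s := {b : Ordinal | (T ∩ Set.Iic b).Infinite})
    (show (T ∩ Set.Iic ζ).Infinite by rwa [Set.inter_eq_self_of_subset_left hTζ])
  have hmin : ∀ b < qs, (T ∩ Set.Iic b).Finite := by
    intro b hb
    rw [← Set.not_infinite]
    intro hbI
    exact absurd (csInf_le' (s := {b : Ordinal | (T ∩ Set.Iic b).Infinite}) hbI) (not_le.2 hb)
  have hlim : (Order.IsSuccLimit qs) := by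
    rcases Ordinal.zero_or_succ_or_isSuccLimit qs with h0 | ⟨b, hb⟩ | h
    · refine absurd hqsM ?_
      rw [h0, Set.not_infinite]
      exact (Set.finite_singleton 0).subset (fun q hq => nonpos_iff_eq_zero.1 hq.2)
    · refine absurd hqsM ?_
      rw [Set.not_infinite, ← hb]
      refine (((hmin b (hb ▸ Order.lt_succ b)).union (Set.finite_singleton (Order.succ b))).subset ?_)
      rintro q ⟨hqT, hqb⟩
      rcases lt_or_eq_of_le (Set.mem_Iic.1 hqb) with h' | h'
      · exact Or.inl ⟨hqT, Order.lt_succ_iff.1 h'⟩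
      · exact Or.inr h'
    · exact h
  have hub : ∀ p < qs, ∃ q ∈ T, p < q ∧ q < qs := by
    intro p hp
    by_contra hc
    push_neg at hc
    refine absurd hqsM ?_
    rw [Set.not_infinite]
    refine ((hmin p hp).union (Set.finite_singleton qs)).subset ?_
    rintro q ⟨hqT, hqqs⟩
    rcases le_or_gt q p with h' | h'
    · exact Or.inl ⟨hqT, h'⟩
    · rcases lt_or_eq_of_le (Set.mem_Iic.1 hqqs) with h'' | h''
      · exact absurd (hc q hqT h') (not_le.2 h'')
      · exact Or.inr h''
  have hxlim : (Order.IsSuccLimit (ξ * qs)) := isSuccLimit_mul_right hξ0 hlim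
  have hxle : ξ * qs ≤ ξ * ζ := mul_le_mul_right hqsζ ξ
  obtain ⟨δ, hδ, hprop⟩ := (continuousAt_limit_iff f hxle hxlim).1
    (f.continuous.continuousAt) (ε/2) (by linarith)
  obtain ⟨p, hp, hδp⟩ := (lt_mul_iff_of_isSuccLimit hlim).1 hδ
  obtain ⟨q, hqT, hpq, hqqs⟩ := hub p hp
  obtain ⟨hqζ, hqnorm⟩ := hqT
  have hr : ∃ r : Set.Iic ξ, ε < ‖hmap ξ ζ hξ q hqζ f r‖ := by
    by_contra hc
    push_neg at hc
    exact absurd ((ContinuousMap.norm_le _ hε.le).2 hc) (not_le.2 hqnorm)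
  obtain ⟨r, hrε⟩ := hr
  have hsq : q + 1 ≤ qs := by
    rw [Ordinal.add_one_eq_succ]; exact (hlim.succ_lt hqqs).le
  have hy1 : ξ * q + 1 + r.1 ≤ ξ * qs :=
    le_trans (blk_le hξ (Order.lt_succ q) r.2)
      (mul_le_mul_right (show Order.succ q ≤ qs by
        rw [← Ordinal.add_one_eq_succ]; exact hsq) ξ)
  have hy2 : ξ * (q + 1) ≤ ξ * qs := mul_le_mul_right hsq ξ
  have hδy1 : δ < ξ * q + 1 + r.1 :=
    lt_of_lt_of_le hδp (le_trans (mul_le_mul_right hpq.le ξ) (le_trans (le_self_add)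
      (le_self_add)))
  have hδy2 : δ < ξ * (q + 1) :=
    lt_of_lt_of_le hδp (mul_le_mul_right (le_trans hpq.le (le_self_add)) ξ)
  have h1 := hprop _ (le_trans hy1 hxle) hδy1 hy1
  have h2 := hprop _ (le_trans hy2 hxle) hδy2 hy2
  rw [hmap_apply] at hrε
  have htri := dist_triangle (f ⟨ξ * q + 1 + r.1, le_trans hy1 hxle⟩)
    (f ⟨ξ * qs, hxle⟩) (f ⟨ξ * (q + 1), le_trans hy2 hxle⟩)
  rw [dist_comm (f ⟨ξ * qs, hxle⟩)] at htri
  have : ‖f ⟨ξ * q + 1 + r.1, blk_le hξ hqζ r.2⟩ - f ⟨ξ * (q + 1),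
      mul_le_mul_right (succ_mem_Iic ζ hqζ) ξ⟩‖ =
      dist (f ⟨ξ * q + 1 + r.1, le_trans hy1 hxle⟩) (f ⟨ξ * (q + 1), le_trans hy2 hxle⟩) := by
    rw [dist_eq_norm]
  rw [this] at hrε
  linarith
end Forward

section Inverse
variable (ξ ζ : Ordinal)

lemma xne (hξ : ω ≤ ξ) : ξ ≠ 0 := (omega0_pos.trans_le hξ).ne'

lemma div_le_zeta (hξ : ω ≤ ξ) {γ : Ordinal} (hγ : γ ≤ ξ * ζ) : γ / ξ ≤ ζ :=
  (Ordinal.div_le (xne ξ hξ)).2 (lt_of_le_of_lt hγ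
    ((mul_lt_mul_iff_right₀ (omega0_pos.trans_le hξ)).2 (Order.lt_succ ζ)))

lemma div_lt_zeta (hξ : ω ≤ ξ) {γ : Ordinal} (hγ : γ ≤ ξ * ζ) (hr : γ % ξ ≠ 0) :
    γ / ξ < ζ := by
  rcases lt_or_eq_of_le (div_le_zeta ξ ζ hξ hγ) with h | h
  · exact h
  · exfalso
    apply hr
    have h2 : ξ * ζ ≤ γ := by
      conv_lhs => rw [← h]
      exact Ordinal.mul_div_le γ ξ
    have h3 : γ = ξ * ζ := le_antisymm hγ h2
    rw [h3, Ordinal.mul_mod]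

lemma mod_sub_le (hξ : ω ≤ ξ) (γ : Ordinal) : γ % ξ - 1 ≤ ξ :=
  le_trans (Ordinal.sub_le_self _ _) (Ordinal.mod_lt γ (xne ξ hξ)).le

lemma blk_div (hξ : ω ≤ ξ) {q r : Ordinal} (hr : r < ξ) : (ξ * q + 1 + r) / ξ = q := by
  have h1r : 1 + r < ξ := by
    calc 1 + r < 1 + ξ := add_lt_add_right hr 1
      _ = ξ := Ordinal.one_add_of_omega0_le hξ
  rw [add_assoc, Ordinal.mul_add_div _ (xne ξ hξ), Ordinal.div_eq_zero_of_lt h1r, add_zero]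

lemma blk_mod (hξ : ω ≤ ξ) {q r : Ordinal} (hr : r < ξ) : (ξ * q + 1 + r) % ξ = 1 + r := by
  have h1r : 1 + r < ξ := by
    calc 1 + r < 1 + ξ := add_lt_add_right hr 1
      _ = ξ := Ordinal.one_add_of_omega0_le hξ
  rw [add_assoc, Ordinal.mul_add_mod_self, Ordinal.mod_eq_of_lt h1r]

lemma decomp_ne {γ : Ordinal} (hr : γ % ξ ≠ 0) :
    ξ * (γ / ξ) + 1 + (γ % ξ - 1) = γ := by
  rw [add_assoc, Ordinal.add_sub_cancel_of_le (Ordinal.one_le_iff_ne_zero.2 hr),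
    Ordinal.div_add_mod]

/-- The inverse map, as a raw function. -/
def Fraw (hξ : ω ≤ ξ) (g : C(Set.Iic ζ, ℝ)) (Hf : ∀ q, q < ζ → C(Set.Iic ξ, ℝ)) :
    Set.Iic (ξ * ζ) → ℝ := fun γ =>
  if hr : γ.1 % ξ = 0 then g ⟨γ.1 / ξ, div_le_zeta ξ ζ hξ γ.2⟩
  else Hf (γ.1 / ξ) (div_lt_zeta ξ ζ hξ γ.2 hr) ⟨γ.1 % ξ - 1, mod_sub_le ξ hξ γ.1⟩ +
    g ⟨γ.1 / ξ + 1, succ_mem_Iic ζ (div_lt_zeta ξ ζ hξ γ.2 hr)⟩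

lemma Hf_congr (Hf : ∀ q, q < ζ → C(Set.Iic ξ, ℝ)) {q q' r r' : Ordinal}
    {hq : q < ζ} {hq' : q' < ζ} {hr : r ≤ ξ} {hr' : r' ≤ ξ}
    (h : q = q') (h2 : r = r') : Hf q hq ⟨r, hr⟩ = Hf q' hq' ⟨r', hr'⟩ := by
  subst h; subst h2; rfl

lemma Fraw_mul (hξ : ω ≤ ξ) (g : C(Set.Iic ζ, ℝ)) (Hf : ∀ q, q < ζ → C(Set.Iic ξ, ℝ))
    {q : Ordinal} (hq : q ≤ ζ) :
    Fraw ξ ζ hξ g Hf ⟨ξ * q, mul_le_mul_right hq ξ⟩ = g ⟨q, hq⟩ := by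
  have h1 : (ξ * q) % ξ = 0 := Ordinal.mul_mod ξ q
  simp only [Fraw]
  rw [dif_pos h1]
  exact congrArg g (Subtype.ext (Ordinal.mul_div_cancel q (xne ξ hξ)))

lemma Fraw_blk (hξ : ω ≤ ξ) (g : C(Set.Iic ζ, ℝ)) (Hf : ∀ q, q < ζ → C(Set.Iic ξ, ℝ))
    {q r : Ordinal} (hq : q < ζ) (hr : r < ξ) :
    Fraw ξ ζ hξ g Hf ⟨ξ * q + 1 + r, blk_le hξ hq hr.le⟩ =
      Hf q hq ⟨r, hr.le⟩ + g ⟨q + 1, succ_mem_Iic ζ hq⟩ := by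
  have hd : (ξ * q + 1 + r) / ξ = q := blk_div ξ hξ hr
  have hm : (ξ * q + 1 + r) % ξ = 1 + r := blk_mod ξ hξ hr
  have hne : (ξ * q + 1 + r) % ξ ≠ 0 := by
    rw [hm]
    exact fun hc => absurd hc (by
      have : (0:Ordinal) < 1 + r := lt_of_lt_of_le zero_lt_one (le_self_add)
      exact this.ne')
  simp only [Fraw]
  rw [dif_neg hne]
  congr 1
  · exact Hf_congr ξ ζ Hf hd (by rw [hm, Ordinal.add_sub_cancel])
  · exact congrArg g (Subtype.ext (show (ξ * q + 1 + r) / ξ + 1 = q + 1 by rw [hd]))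

lemma continuous_Fraw (hξ : ω ≤ ξ) (g : C(Set.Iic ζ, ℝ)) (Hf : ∀ q, q < ζ → C(Set.Iic ξ, ℝ))
    (hHtop : ∀ q hq, Hf q hq ⟨ξ, Set.self_mem_Iic⟩ = 0)
    (hc0 : ∀ ε : ℝ, 0 < ε → {q : Ordinal | ∃ hq : q < ζ, ε < ‖Hf q hq‖}.Finite) :
    Continuous (Fraw ξ ζ hξ g Hf) := by
  have hξ0 : (0:Ordinal) < ξ := omega0_pos.trans_le hξ
  rw [continuous_iff_continuousAt]
  rintro ⟨x, hx⟩
  rcases em (Order.IsSuccLimit x) with hlimx | hlimx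
  swap
  · exact continuousAt_of_not_isLimit _ _ hlimx
  rw [continuousAt_limit_iff _ hx hlimx]
  intro ε hε
  by_cases hr0 : x % ξ = 0
  · have hx0 : ξ * (x / ξ) = x := by
      conv_rhs => rw [← Ordinal.div_add_mod x ξ]
      rw [hr0, add_zero]
    rcases Ordinal.zero_or_succ_or_isSuccLimit (x / ξ) with h0 | ⟨p0, hp0⟩ | hq0lim
    · exfalso; rw [h0, mul_zero] at hx0; exact hlimx.pos.ne' hx0.symm
    · -- x = ξ * succ p0
      have hp0ζ : p0 < ζ := by
        have h := div_le_zeta ξ ζ hξ hx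
        rw [← hp0] at h
        exact Order.succ_le_iff.1 h
      have hxsucc : ξ * Order.succ p0 = x := by rw [hp0]; exact hx0
      have hxs : x = ξ * p0 + ξ := by rw [← hxsucc, Ordinal.mul_succ]
      have hξlim : (Order.IsSuccLimit ξ) := by
        rcases Ordinal.isSuccLimit_add_iff.1 (hxs ▸ hlimx) with h | ⟨h1, h2⟩
        · exact h
        · exact absurd h1 (xne ξ hξ)
      obtain ⟨δ'', hδ'', hHp⟩ := (continuousAt_limit_iff (Hf p0 hp0ζ) (le_refl ξ) hξlim).1
        ((Hf p0 hp0ζ).continuous.continuousAt) ε hε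
      have hδ1 : δ'' + 1 < ξ := by
        rw [Ordinal.add_one_eq_succ]; exact hξlim.succ_lt hδ''
      refine ⟨ξ * p0 + (δ'' + 1), by rw [hxs]; exact add_lt_add_right hδ1 _, ?_⟩
      intro y hy h1 h2
      rcases eq_or_lt_of_le h2 with heq | h2'
      · have hpt : (⟨y, hy⟩ : Set.Iic (ξ*ζ)) = ⟨x, hx⟩ := Subtype.ext heq
        rw [hpt, dist_self]; exact hε
      · have hq : y / ξ = p0 := by
          apply le_antisymm
          · exact (Ordinal.div_le (xne ξ hξ)).2 (by rw [hxsucc]; exact h2')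
          · exact (Ordinal.le_div (xne ξ hξ)).2 (le_trans (le_self_add) h1.le)
        have hyr : ξ * p0 + y % ξ = y := by
          conv_rhs => rw [← Ordinal.div_add_mod y ξ]
          rw [hq]
        have hrgt : δ'' + 1 < y % ξ := by
          have h' := h1
          rw [← hyr] at h'
          exact (add_lt_add_iff_left _).1 h'
        have hrξ : y % ξ < ξ := Ordinal.mod_lt y (xne ξ hξ)
        have hrne : y % ξ ≠ 0 := (lt_of_le_of_lt (zero_le) hrgt).ne'
        have hFy : Fraw ξ ζ hξ g Hf ⟨y, hy⟩ =
            Hf p0 hp0ζ ⟨y % ξ - 1, mod_sub_le ξ hξ y⟩ + g ⟨p0 + 1, succ_mem_Iic ζ hp0ζ⟩ := by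
          have hpt : (⟨y, hy⟩ : Set.Iic (ξ*ζ)) =
              ⟨ξ * p0 + 1 + (y % ξ - 1), blk_le hξ hp0ζ (mod_sub_le ξ hξ y)⟩ :=
            Subtype.ext (show y = ξ * p0 + 1 + (y % ξ - 1) by
              rw [← hq]; exact (decomp_ne ξ hrne).symm)
          rw [hpt]
          exact Fraw_blk ξ ζ hξ g Hf hp0ζ (lt_of_le_of_lt (Ordinal.sub_le_self _ _) hrξ)
        have hFx : Fraw ξ ζ hξ g Hf ⟨x, hx⟩ = g ⟨p0 + 1, succ_mem_Iic ζ hp0ζ⟩ := by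
          have hpt : (⟨x, hx⟩ : Set.Iic (ξ*ζ)) =
              ⟨ξ * (p0 + 1), mul_le_mul_right (succ_mem_Iic ζ hp0ζ) ξ⟩ :=
            Subtype.ext (show x = ξ * (p0 + 1) by rw [← hxsucc, Ordinal.add_one_eq_succ])
          rw [hpt]
          exact Fraw_mul ξ ζ hξ g Hf (succ_mem_Iic ζ hp0ζ)
        rw [hFy, hFx, Real.dist_eq, add_sub_cancel_right]
        have happ := hHp (y % ξ - 1) (mod_sub_le ξ hξ y) (sub_one_mem hrgt) (mod_sub_le ξ hξ y)
        have h0 : Hf p0 hp0ζ ⟨ξ, le_refl ξ⟩ = 0 := hHtop p0 hp0ζ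
        rw [Real.dist_eq, h0, _root_.sub_zero] at happ
        exact happ
    · -- q0 limit
      set q0 := x / ξ with hq0def
      have hq0ζ : q0 ≤ ζ := div_le_zeta ξ ζ hξ hx
      obtain ⟨δg, hδg, hgp⟩ := (continuousAt_limit_iff g hq0ζ hq0lim).1
        (g.continuous.continuousAt) (ε/3) (by linarith)
      have hBad := hc0 (ε/3) (by linarith)
      have hB''fin : (insert δg ({q : Ordinal | ∃ hq : q < ζ, ε/3 < ‖Hf q hq‖} ∩ Set.Iio q0)).Finite :=
        (hBad.inter_of_left _).insert δg
      have hB''ne : (insert δg ({q : Ordinal | ∃ hq : q < ζ, ε/3 < ‖Hf q hq‖} ∩ Set.Iio q0)).Nonempty :=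
        ⟨δg, Set.mem_insert _ _⟩
      set p := sSup (insert δg ({q : Ordinal | ∃ hq : q < ζ, ε/3 < ‖Hf q hq‖} ∩ Set.Iio q0)) with hpdef
      have hpmem := hB''ne.csSup_mem hB''fin
      have hpq0 : p < q0 := by
        rcases hpmem with h | h
        · rw [hpdef, h]; exact hδg
        · exact h.2
      have hδgp : δg ≤ p := le_csSup hB''fin.bddAbove (Set.mem_insert _ _)
      have hbadp : ∀ b (hb : b < ζ), ε/3 < ‖Hf b hb‖ → b < q0 → b ≤ p :=
        fun b hb hbn hbq0 => le_csSup hB''fin.bddAbove (Set.mem_insert_of_mem _ ⟨⟨hb, hbn⟩, hbq0⟩)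
      have hPq0 : p + 1 < q0 := by rw [Ordinal.add_one_eq_succ]; exact hq0lim.succ_lt hpq0
      refine ⟨ξ * (p + 1), by rw [← hx0]; exact (mul_lt_mul_iff_right₀ hξ0).2 hPq0, ?_⟩
      intro y hy h1 h2
      have hqle : y / ξ ≤ q0 := (Ordinal.div_le (xne ξ hξ)).2 (lt_of_le_of_lt h2
        (by rw [← hx0]; exact (mul_lt_mul_iff_right₀ hξ0).2 (Order.lt_succ q0)))
      have hqge : p + 1 ≤ y / ξ := (Ordinal.le_div (xne ξ hξ)).2 h1.le
      have hFx : Fraw ξ ζ hξ g Hf ⟨x, hx⟩ = g ⟨q0, hq0ζ⟩ := by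
        have hpt : (⟨x, hx⟩ : Set.Iic (ξ*ζ)) = ⟨ξ * q0, mul_le_mul_right hq0ζ ξ⟩ :=
          Subtype.ext hx0.symm
        rw [hpt]
        exact Fraw_mul ξ ζ hξ g Hf hq0ζ
      by_cases hr : y % ξ = 0
      · have hy0 : ξ * (y / ξ) = y := by
          conv_rhs => rw [← Ordinal.div_add_mod y ξ]
          rw [hr, add_zero]
        have hqgt : p + 1 < y / ξ := by
          rcases lt_or_eq_of_le hqge with h | h
          · exact h
          · exfalso
            rw [← h] at hy0
            rw [hy0] at h1
            exact lt_irrefl _ h1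
        have hFy : Fraw ξ ζ hξ g Hf ⟨y, hy⟩ = g ⟨y / ξ, le_trans hqle hq0ζ⟩ := by
          have hpt : (⟨y, hy⟩ : Set.Iic (ξ*ζ)) =
              ⟨ξ * (y / ξ), mul_le_mul_right (le_trans hqle hq0ζ) ξ⟩ := Subtype.ext hy0.symm
          rw [hpt]
          exact Fraw_mul ξ ζ hξ g Hf _
        rw [hFy, hFx]
        have happ := hgp (y / ξ) (le_trans hqle hq0ζ)
          (lt_of_le_of_lt hδgp (lt_trans (lt_add_one p) hqgt)) hqle
        linarith
      · have hqlt : y / ξ < q0 := by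
          rcases lt_or_eq_of_le hqle with h | h
          · exact h
          · exfalso
            have hxy : x < y := by
              rw [← hx0, ← h]
              calc ξ * (y / ξ) = ξ * (y / ξ) + 0 := (add_zero _).symm
                _ < ξ * (y / ξ) + y % ξ :=
                  add_lt_add_right (pos_iff_ne_zero.2 hr) _
                _ = y := Ordinal.div_add_mod y ξ
            exact absurd h2 (not_le.2 hxy)
        have hqζ : y / ξ < ζ := lt_of_lt_of_le hqlt hq0ζ
        have hFy : Fraw ξ ζ hξ g Hf ⟨y, hy⟩ =
            Hf (y / ξ) hqζ ⟨y % ξ - 1, mod_sub_le ξ hξ y⟩ +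
              g ⟨y / ξ + 1, succ_mem_Iic ζ hqζ⟩ := by
          have hpt : (⟨y, hy⟩ : Set.Iic (ξ*ζ)) =
              ⟨ξ * (y / ξ) + 1 + (y % ξ - 1), blk_le hξ hqζ (mod_sub_le ξ hξ y)⟩ :=
            Subtype.ext (decomp_ne ξ hr).symm
          rw [hpt]
          exact Fraw_blk ξ ζ hξ g Hf hqζ
            (lt_of_le_of_lt (Ordinal.sub_le_self _ _) (Ordinal.mod_lt y (xne ξ hξ)))
        rw [hFy, hFx, Real.dist_eq]
        have hgterm : |g ⟨y / ξ + 1, succ_mem_Iic ζ hqζ⟩ - g ⟨q0, hq0ζ⟩| < ε/3 := by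
          have happ := hgp (y / ξ + 1) (succ_mem_Iic ζ hqζ)
            (lt_of_le_of_lt hδgp (lt_of_lt_of_le (lt_add_one p) (le_trans hqge (le_self_add))))
            (by rw [Ordinal.add_one_eq_succ]; exact Order.succ_le_of_lt hqlt)
          rwa [Real.dist_eq] at happ
        have hHterm : |Hf (y / ξ) hqζ ⟨y % ξ - 1, mod_sub_le ξ hξ y⟩| ≤ ε/3 := by
          have hnotbad : ¬ (ε/3 < ‖Hf (y / ξ) hqζ‖) := by
            intro hc
            have hle := hbadp (y / ξ) hqζ hc hqlt
            exact absurd (lt_of_lt_of_le (lt_add_one p) hqge) (not_lt.2 hle)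
          push_neg at hnotbad
          calc |Hf (y / ξ) hqζ ⟨y % ξ - 1, mod_sub_le ξ hξ y⟩|
              = ‖Hf (y / ξ) hqζ ⟨y % ξ - 1, mod_sub_le ξ hξ y⟩‖ := (Real.norm_eq_abs _).symm
            _ ≤ ‖Hf (y / ξ) hqζ‖ := (Hf (y / ξ) hqζ).norm_coe_le_norm _
            _ ≤ ε/3 := hnotbad
        calc |Hf (y / ξ) hqζ ⟨y % ξ - 1, mod_sub_le ξ hξ y⟩ +
              g ⟨y / ξ + 1, succ_mem_Iic ζ hqζ⟩ - g ⟨q0, hq0ζ⟩|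
            = |Hf (y / ξ) hqζ ⟨y % ξ - 1, mod_sub_le ξ hξ y⟩ +
              (g ⟨y / ξ + 1, succ_mem_Iic ζ hqζ⟩ - g ⟨q0, hq0ζ⟩)| := by rw [add_sub_assoc]
          _ ≤ |Hf (y / ξ) hqζ ⟨y % ξ - 1, mod_sub_le ξ hξ y⟩| +
              |g ⟨y / ξ + 1, succ_mem_Iic ζ hqζ⟩ - g ⟨q0, hq0ζ⟩| := abs_add_le _ _
          _ < ε := by linarith
  · -- x % ξ ≠ 0
    set q0 := x / ξ with hq0def
    set r0 := x % ξ with hr0def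
    have hq0ζ : q0 < ζ := div_lt_zeta ξ ζ hξ hx hr0
    have hxdecomp : ξ * q0 + r0 = x := Ordinal.div_add_mod x ξ
    have hr0lim : (Order.IsSuccLimit r0) := by
      have h := hlimx
      rw [← hxdecomp] at h
      rcases Ordinal.isSuccLimit_add_iff.1 h with h' | ⟨h1, h2⟩
      · exact h'
      · exact absurd h1 hr0
    have hr0ξ : r0 < ξ := Ordinal.mod_lt x (xne ξ hξ)
    obtain ⟨δ'', hδ'', hHp⟩ := (continuousAt_limit_iff (Hf q0 hq0ζ) hr0ξ.le hr0lim).1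
      ((Hf q0 hq0ζ).continuous.continuousAt) ε hε
    have hδ1 : δ'' + 1 < r0 := by rw [Ordinal.add_one_eq_succ]; exact hr0lim.succ_lt hδ''
    refine ⟨ξ * q0 + (δ'' + 1), by rw [← hxdecomp]; exact add_lt_add_right hδ1 _, ?_⟩
    intro y hy h1 h2
    have hxlt : x < ξ * Order.succ q0 := by
      rw [← hxdecomp, Ordinal.mul_succ]
      exact add_lt_add_right hr0ξ _
    have hq : y / ξ = q0 := by
      apply le_antisymm
      · exact (Ordinal.div_le (xne ξ hξ)).2 (lt_of_le_of_lt h2 hxlt)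
      · exact (Ordinal.le_div (xne ξ hξ)).2 (le_trans (le_self_add) h1.le)
    have hyr : ξ * q0 + y % ξ = y := by
      conv_rhs => rw [← Ordinal.div_add_mod y ξ]
      rw [hq]
    have hrgt : δ'' + 1 < y % ξ := by
      have h' := h1
      rw [← hyr] at h'
      exact (add_lt_add_iff_left _).1 h'
    have hrle : y % ξ ≤ r0 := by
      have h' := h2
      rw [← hyr, ← hxdecomp] at h'
      exact (add_le_add_iff_left _).1 h'
    have hrne : y % ξ ≠ 0 := (lt_of_le_of_lt (zero_le) hrgt).ne'
    have hFy : Fraw ξ ζ hξ g Hf ⟨y, hy⟩ =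
        Hf q0 hq0ζ ⟨y % ξ - 1, mod_sub_le ξ hξ y⟩ + g ⟨q0 + 1, succ_mem_Iic ζ hq0ζ⟩ := by
      have hpt : (⟨y, hy⟩ : Set.Iic (ξ*ζ)) =
          ⟨ξ * q0 + 1 + (y % ξ - 1), blk_le hξ hq0ζ (mod_sub_le ξ hξ y)⟩ :=
        Subtype.ext (show y = ξ * q0 + 1 + (y % ξ - 1) by
          rw [← hq]; exact (decomp_ne ξ hrne).symm)
      rw [hpt]
      exact Fraw_blk ξ ζ hξ g Hf hq0ζ
        (lt_of_le_of_lt (Ordinal.sub_le_self _ _) (Ordinal.mod_lt y (xne ξ hξ)))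
    have hFx : Fraw ξ ζ hξ g Hf ⟨x, hx⟩ =
        Hf q0 hq0ζ ⟨r0 - 1, mod_sub_le ξ hξ x⟩ + g ⟨q0 + 1, succ_mem_Iic ζ hq0ζ⟩ := by
      have hpt : (⟨x, hx⟩ : Set.Iic (ξ*ζ)) =
          ⟨ξ * q0 + 1 + (r0 - 1), blk_le hξ hq0ζ (mod_sub_le ξ hξ x)⟩ :=
        Subtype.ext (decomp_ne ξ hr0).symm
      rw [hpt]
      exact Fraw_blk ξ ζ hξ g Hf hq0ζ
        (lt_of_le_of_lt (Ordinal.sub_le_self _ _) hr0ξ)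
    rw [hFy, hFx, Real.dist_eq, add_sub_add_right_eq_sub]
    have hr0sub : r0 - 1 = r0 := by
      conv_lhs => rw [← Ordinal.one_add_of_omega0_le (omega0_le_of_isSuccLimit hr0lim)]
      rw [Ordinal.add_sub_cancel]
    have hr0pt : (⟨r0 - 1, mod_sub_le ξ hξ x⟩ : Set.Iic ξ) = ⟨r0, hr0ξ.le⟩ :=
      Subtype.ext hr0sub
    rw [hr0pt]
    have happ := hHp (y % ξ - 1) (mod_sub_le ξ hξ y) (sub_one_mem hrgt)
      (le_trans (Ordinal.sub_le_self _ _) hrle)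
    rwa [Real.dist_eq] at happ

end Inverse
end OrdAux


section Assemble
open OrdAux
variable (ξ ζ : Ordinal) (hξ : ω ≤ ξ)

def Tg (f : Czero (ξ * ζ)) : Czero ζ :=
  ⟨gmap ξ ζ hξ f.1, by
    show gmap ξ ζ hξ f.1 ⟨ζ, Set.self_mem_Iic⟩ = 0
    rw [gmap_apply]
    exact f.2⟩

def ThC (f : Czero (ξ * ζ)) (q : Set.Iio ζ) : Czero ξ :=
  ⟨hmap ξ ζ hξ q.1 q.2 f.1, hmap_top ξ ζ hξ q.1 q.2 f.1⟩

def ThL (f : Czero (ξ * ζ)) : lp (fun _ : Set.Iio ζ => Czero ξ) ⊤ :=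
  ⟨fun q => ThC ξ ζ hξ f q, memℓp_infty ⟨2 * ‖f.1‖, by
    rintro x ⟨q, rfl⟩
    exact hmap_norm_le ξ ζ hξ q.1 q.2 f.1⟩⟩

def Th (f : Czero (ξ * ζ)) : czero (Set.Iio ζ) (Czero ξ) :=
  ⟨ThL ξ ζ hξ f, by
    intro ε hε
    have hfin := hmap_finite ξ ζ hξ f.1 hε
    have hset : {s : Set.Iio ζ |
        ε < ‖(ThL ξ ζ hξ f : ∀ _ : Set.Iio ζ, Czero ξ) s‖} =
        Subtype.val ⁻¹' {q : Ordinal | ∃ hq : q < ζ, ε < ‖hmap ξ ζ hξ q hq f.1‖} := by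
      ext s
      constructor
      · intro h; exact ⟨s.2, h⟩
      · rintro ⟨hq, h⟩; exact h
    rw [hset]
    exact hfin.preimage (Set.injOn_of_injective Subtype.val_injective)⟩

def SHf (H : czero (Set.Iio ζ) (Czero ξ)) : ∀ q, q < ζ → C(Set.Iic ξ, ℝ) :=
  fun q hq =>
    (((H : lp (fun _ : Set.Iio ζ => Czero ξ) ⊤) : ∀ _ : Set.Iio ζ, Czero ξ) ⟨q, hq⟩ : Czero ξ).1

def Sfun (p : Czero ζ × czero (Set.Iio ζ) (Czero ξ)) : Czero (ξ * ζ) :=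
  ⟨⟨Fraw ξ ζ hξ p.1.1 (SHf ξ ζ p.2),
    continuous_Fraw ξ ζ hξ p.1.1 (SHf ξ ζ p.2)
      (fun q hq =>
        (((p.2 : lp (fun _ : Set.Iio ζ => Czero ξ) ⊤) : ∀ _ : Set.Iio ζ, Czero ξ) ⟨q, hq⟩).2)
      (by
        intro ε hε
        have hfin := p.2.2 ε hε
        have himg := hfin.image Subtype.val
        refine himg.subset ?_
        rintro q ⟨hq, h⟩
        exact ⟨⟨q, hq⟩, h, rfl⟩)⟩, by
    show Fraw ξ ζ hξ p.1.1 (SHf ξ ζ p.2) ⟨ξ * ζ, Set.self_mem_Iic⟩ = 0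
    have h1 : Fraw ξ ζ hξ p.1.1 (SHf ξ ζ p.2) ⟨ξ * ζ, mul_le_mul_right le_rfl ξ⟩ =
        p.1.1 ⟨ζ, Set.self_mem_Iic⟩ := Fraw_mul ξ ζ hξ p.1.1 (SHf ξ ζ p.2) le_rfl
    exact h1.trans p.1.2⟩

lemma left_inv_ST (f : Czero (ξ * ζ)) :
    Sfun ξ ζ hξ (Tg ξ ζ hξ f, Th ξ ζ hξ f) = f := by
  apply Subtype.ext
  apply ContinuousMap.ext
  rintro ⟨γ, hγ⟩
  show Fraw ξ ζ hξ (gmap ξ ζ hξ f.1) (SHf ξ ζ (Th ξ ζ hξ f)) ⟨γ, hγ⟩ = f.1 ⟨γ, hγ⟩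
  by_cases hr : γ % ξ = 0
  · have hγ0 : ξ * (γ / ξ) = γ := by
      conv_rhs => rw [← Ordinal.div_add_mod γ ξ]
      rw [hr, add_zero]
    have hpt : (⟨γ, hγ⟩ : Set.Iic (ξ * ζ)) =
        ⟨ξ * (γ / ξ), mul_le_mul_right (div_le_zeta ξ ζ hξ hγ) ξ⟩ := Subtype.ext hγ0.symm
    rw [hpt, Fraw_mul ξ ζ hξ _ _ (div_le_zeta ξ ζ hξ hγ), gmap_apply]
  · have hqζ : γ / ξ < ζ := div_lt_zeta ξ ζ hξ hγ hr
    have hpt : (⟨γ, hγ⟩ : Set.Iic (ξ * ζ)) =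
        ⟨ξ * (γ / ξ) + 1 + (γ % ξ - 1), blk_le hξ hqζ (mod_sub_le ξ hξ γ)⟩ :=
      Subtype.ext (decomp_ne ξ hr).symm
    rw [hpt, Fraw_blk ξ ζ hξ _ _ hqζ
      (lt_of_le_of_lt (Ordinal.sub_le_self _ _) (Ordinal.mod_lt γ (xne ξ hξ)))]
    show hmap ξ ζ hξ (γ / ξ) hqζ f.1 _ + gmap ξ ζ hξ f.1 _ = _
    rw [hmap_apply, gmap_apply]
    exact sub_add_cancel _ _
lemma right_inv_TS (p : Czero ζ × czero (Set.Iio ζ) (Czero ξ)) :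
    (Tg ξ ζ hξ (Sfun ξ ζ hξ p), Th ξ ζ hξ (Sfun ξ ζ hξ p)) = p := by
  have hg : Tg ξ ζ hξ (Sfun ξ ζ hξ p) = p.1 := by
    apply Subtype.ext
    apply ContinuousMap.ext
    rintro ⟨q, hq⟩
    show gmap ξ ζ hξ (Sfun ξ ζ hξ p).1 ⟨q, hq⟩ = p.1.1 ⟨q, hq⟩
    rw [gmap_apply]
    exact Fraw_mul ξ ζ hξ p.1.1 (SHf ξ ζ p.2) hq
  have hh : Th ξ ζ hξ (Sfun ξ ζ hξ p) = p.2 := by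
    apply Subtype.ext
    apply Subtype.ext
    funext q
    apply Subtype.ext
    apply ContinuousMap.ext
    rintro ⟨r, hr⟩
    show hmap ξ ζ hξ q.1 q.2 (Sfun ξ ζ hξ p).1 ⟨r, hr⟩ = SHf ξ ζ p.2 q.1 q.2 ⟨r, hr⟩
    rw [hmap_apply ξ ζ hξ q.1 q.2]
    rcases lt_or_eq_of_le (Set.mem_Iic.1 hr) with hrξ | hrξ
    · have h1 : (Sfun ξ ζ hξ p).1 ⟨ξ * q.1 + 1 + r, blk_le hξ q.2 hr⟩ =
          SHf ξ ζ p.2 q.1 q.2 ⟨r, hr⟩ + p.1.1 ⟨q.1 + 1, succ_mem_Iic ζ q.2⟩ :=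
        Fraw_blk ξ ζ hξ p.1.1 (SHf ξ ζ p.2) q.2 hrξ
      have h2 : (Sfun ξ ζ hξ p).1 ⟨ξ * (q.1 + 1),
          mul_le_mul_right (succ_mem_Iic ζ q.2) ξ⟩ =
          p.1.1 ⟨q.1 + 1, succ_mem_Iic ζ q.2⟩ :=
        Fraw_mul ξ ζ hξ p.1.1 (SHf ξ ζ p.2) (succ_mem_Iic ζ q.2)
      rw [h1, h2, add_sub_cancel_right]
    · have h1 : (⟨ξ * q.1 + 1 + r, blk_le hξ q.2 hr⟩ : Set.Iic (ξ * ζ)) =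
          ⟨ξ * (q.1 + 1), mul_le_mul_right (succ_mem_Iic ζ q.2) ξ⟩ :=
        Subtype.ext (show ξ * q.1 + 1 + r = ξ * (q.1 + 1) by rw [hrξ]; exact blk_top ξ hξ q.1)
      rw [h1, _root_.sub_self]
      have hpt : (⟨r, hr⟩ : Set.Iic ξ) = ⟨ξ, Set.self_mem_Iic⟩ := Subtype.ext hrξ
      have h2 : SHf ξ ζ p.2 q.1 q.2 ⟨r, hr⟩ = 0 := by
        rw [hpt]
        exact (((p.2 : lp (fun _ : Set.Iio ζ => Czero ξ) ⊤) : ∀ _ : Set.Iio ζ, Czero ξ)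
          ⟨q.1, q.2⟩).2
      rw [h2]
  rw [hg, hh]

lemma Tg_add (f f' : Czero (ξ * ζ)) :
    Tg ξ ζ hξ (f + f') = Tg ξ ζ hξ f + Tg ξ ζ hξ f' := by
  apply Subtype.ext
  apply ContinuousMap.ext
  intro q
  show gmap ξ ζ hξ (f + f').1 q = gmap ξ ζ hξ f.1 q + gmap ξ ζ hξ f'.1 q
  rw [gmap_apply, gmap_apply, gmap_apply]
  rfl

lemma Tg_smul (c : ℝ) (f : Czero (ξ * ζ)) :
    Tg ξ ζ hξ (c • f) = c • Tg ξ ζ hξ f := by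
  apply Subtype.ext
  apply ContinuousMap.ext
  intro q
  show gmap ξ ζ hξ (c • f).1 q = c • gmap ξ ζ hξ f.1 q
  rw [gmap_apply, gmap_apply]
  rfl

lemma Th_add (f f' : Czero (ξ * ζ)) :
    Th ξ ζ hξ (f + f') = Th ξ ζ hξ f + Th ξ ζ hξ f' := by
  apply Subtype.ext
  apply Subtype.ext
  funext q
  apply Subtype.ext
  apply ContinuousMap.ext
  intro r
  show hmap ξ ζ hξ q.1 q.2 (f + f').1 r =
    hmap ξ ζ hξ q.1 q.2 f.1 r + hmap ξ ζ hξ q.1 q.2 f'.1 r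
  rw [hmap_apply ξ ζ hξ q.1 q.2, hmap_apply ξ ζ hξ q.1 q.2, hmap_apply ξ ζ hξ q.1 q.2]
  show (f.1 + f'.1) _ - (f.1 + f'.1) _ = _
  rw [ContinuousMap.add_apply, ContinuousMap.add_apply]
  ring

lemma Th_smul (c : ℝ) (f : Czero (ξ * ζ)) :
    Th ξ ζ hξ (c • f) = c • Th ξ ζ hξ f := by
  apply Subtype.ext
  apply Subtype.ext
  funext q
  apply Subtype.ext
  apply ContinuousMap.ext
  intro r
  show hmap ξ ζ hξ q.1 q.2 (c • f).1 r = c • hmap ξ ζ hξ q.1 q.2 f.1 r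
  rw [hmap_apply ξ ζ hξ q.1 q.2, hmap_apply ξ ζ hξ q.1 q.2]
  show (c • f.1) _ - (c • f.1) _ = _
  rw [ContinuousMap.smul_apply, ContinuousMap.smul_apply]
  show c * _ - c * _ = c * _
  ring

lemma Tg_norm_le (f : Czero (ξ * ζ)) : ‖Tg ξ ζ hξ f‖ ≤ 2 * ‖f‖ := by
  show ‖gmap ξ ζ hξ f.1‖ ≤ 2 * ‖f.1‖
  refine (ContinuousMap.norm_le _ (by positivity)).2 fun q => ?_
  rw [gmap_apply]
  have := f.1.norm_coe_le_norm ⟨ξ * q.1, mul_le_mul_right q.2 ξ⟩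
  have h0 : (0:ℝ) ≤ ‖f.1‖ := norm_nonneg _
  linarith

lemma Th_norm_le (f : Czero (ξ * ζ)) : ‖Th ξ ζ hξ f‖ ≤ 2 * ‖f‖ := by
  show ‖ThL ξ ζ hξ f‖ ≤ 2 * ‖f.1‖
  refine lp.norm_le_of_forall_le (by positivity) fun q => ?_
  exact hmap_norm_le ξ ζ hξ q.1 q.2 f.1

lemma Sfun_norm_le (p : Czero ζ × czero (Set.Iio ζ) (Czero ξ)) :
    ‖Sfun ξ ζ hξ p‖ ≤ 2 * ‖p‖ := by
  have hp1 : ‖p.1‖ ≤ ‖p‖ := norm_fst_le p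
  have hp2 : ‖p.2‖ ≤ ‖p‖ := norm_snd_le p
  have hp0 : (0:ℝ) ≤ ‖p‖ := norm_nonneg p
  show ‖(⟨Fraw ξ ζ hξ p.1.1 (SHf ξ ζ p.2), _⟩ : C(Set.Iic (ξ * ζ), ℝ))‖ ≤ 2 * ‖p‖
  refine (ContinuousMap.norm_le _ (by positivity)).2 fun γ => ?_
  show ‖Fraw ξ ζ hξ p.1.1 (SHf ξ ζ p.2) γ‖ ≤ 2 * ‖p‖
  have hg : ∀ t : Set.Iic ζ, ‖p.1.1 t‖ ≤ ‖p‖ :=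
    fun t => le_trans (p.1.1.norm_coe_le_norm t) hp1
  have hH : ∀ (q : Ordinal) (hq : q < ζ) (t : Set.Iic ξ), ‖SHf ξ ζ p.2 q hq t‖ ≤ ‖p‖ := by
    intro q hq t
    refine le_trans ((SHf ξ ζ p.2 q hq).norm_coe_le_norm t) (le_trans ?_ hp2)
    show ‖((p.2 : lp (fun _ : Set.Iio ζ => Czero ξ) ⊤) : ∀ _ : Set.Iio ζ, Czero ξ) ⟨q, hq⟩‖ ≤ ‖p.2‖
    exact lp.norm_apply_le_norm ENNReal.top_ne_zero
      (p.2 : lp (fun _ : Set.Iio ζ => Czero ξ) ⊤) ⟨q, hq⟩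
  simp only [Fraw]
  split_ifs with h
  · exact le_trans (hg _) (by linarith)
  · refine le_trans (norm_add_le _ _) ?_
    have := hH (γ.1 / ξ) (div_lt_zeta ξ ζ hξ γ.2 h) ⟨γ.1 % ξ - 1, mod_sub_le ξ hξ γ.1⟩
    have := hg ⟨γ.1 / ξ + 1, succ_mem_Iic ζ (div_lt_zeta ξ ζ hξ γ.2 h)⟩
    linarith [hH (γ.1 / ξ) (div_lt_zeta ξ ζ hξ γ.2 h) ⟨γ.1 % ξ - 1, mod_sub_le ξ hξ γ.1⟩,
      hg ⟨γ.1 / ξ + 1, succ_mem_Iic ζ (div_lt_zeta ξ ζ hξ γ.2 h)⟩]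

end Assemble

theorem statement1 (ξ ζ : Ordinal) (hζ : 0 < ζ) (hζξ : ζ ≤ ξ) (hξ : ω ≤ ξ) :
    Nonempty (Czero (ξ * ζ) ≃L[ℝ] (Czero ζ × czero (Set.Iio ζ) (Czero ξ))) := by
  classical
  refine ⟨?_⟩
  refine
    { toLinearEquiv :=
        { toFun := fun f => (Tg ξ ζ hξ f, Th ξ ζ hξ f)
          invFun := Sfun ξ ζ hξ
          map_add' := fun f f' => Prod.ext (Tg_add ξ ζ hξ f f') (Th_add ξ ζ hξ f f')
          map_smul' := fun c f => Prod.ext (Tg_smul ξ ζ hξ c f) (Th_smul ξ ζ hξ c f)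
          left_inv := left_inv_ST ξ ζ hξ
          right_inv := right_inv_TS ξ ζ hξ }
      continuous_toFun := ?_
      continuous_invFun := ?_ }
  · refine AddMonoidHomClass.continuous_of_bound
      (⟨⟨fun f => (Tg ξ ζ hξ f, Th ξ ζ hξ f),
        fun f f' => Prod.ext (Tg_add ξ ζ hξ f f') (Th_add ξ ζ hξ f f')⟩,
        fun c f => Prod.ext (Tg_smul ξ ζ hξ c f) (Th_smul ξ ζ hξ c f)⟩ :
          Czero (ξ * ζ) →ₗ[ℝ] (Czero ζ × czero (Set.Iio ζ) (Czero ξ))) 2 ?_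
    intro f
    rw [Prod.norm_def]
    exact max_le (Tg_norm_le ξ ζ hξ f) (Th_norm_le ξ ζ hξ f)
  · refine AddMonoidHomClass.continuous_of_bound
      (⟨⟨Sfun ξ ζ hξ, ?_⟩, ?_⟩ :
          (Czero ζ × czero (Set.Iio ζ) (Czero ξ)) →ₗ[ℝ] Czero (ξ * ζ)) 2
      (Sfun_norm_le ξ ζ hξ)
    · intro p p'
      have hinj : Function.Injective
          (fun f => (Tg ξ ζ hξ f, Th ξ ζ hξ f) :
            Czero (ξ * ζ) → Czero ζ × czero (Set.Iio ζ) (Czero ξ)) :=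
        Function.LeftInverse.injective (left_inv_ST ξ ζ hξ)
      apply hinj
      dsimp only
      rw [right_inv_TS, Tg_add, Th_add, ← Prod.mk_add_mk, right_inv_TS, right_inv_TS]
    · intro c p
      have hinj : Function.Injective
          (fun f => (Tg ξ ζ hξ f, Th ξ ζ hξ f) :
            Czero (ξ * ζ) → Czero ζ × czero (Set.Iio ζ) (Czero ξ)) :=
        Function.LeftInverse.injective (left_inv_ST ξ ζ hξ)
      apply hinj
      dsimp only
      rw [right_inv_TS, Tg_smul, Th_smul, ← Prod.smul_mk, right_inv_TS]
      rfl
end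
end

section
/- For every ordinal γ and every natural number n with 1 < n < ω, the Banach space C₀([0, ω^(ω^γ · n)]) is isomorphic to c₀(ω^(ω^γ), C₀([0, ω^(ω^γ)])). -/
set_option synthInstance.maxHeartbeats 1000000
set_option maxHeartbeats 1000000

noncomputable section

open Ordinal Set Metric

-- ========================= auxiliary development =========================
section OrdTopology
-- isolated points
theorem ord_pure_nhds {x : Ordinal} (h : ¬ Order.IsSuccLimit x) : {x} ∈ nhds x := by
  rcases Ordinal.zero_or_succ_or_isSuccLimit x with rfl | ⟨b, rfl⟩ | hl
  · have : IsOpen (Set.Iio (1 : Ordinal)) := isOpen_Iio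
    have he : Set.Iio (1 : Ordinal) = {0} := by
      ext y; simp [Ordinal.lt_one_iff_zero]
    exact he ▸ this.mem_nhds (by simp [he ▸ Set.mem_Iio])
  · have : IsOpen (Set.Ioo b (Order.succ b + 1)) := isOpen_Ioo
    have he : Set.Ioo b (Order.succ b + 1) = {Order.succ b} := by
      ext y
      simp only [Set.mem_Ioo, Set.mem_singleton_iff, Ordinal.add_one_eq_succ,
        Order.lt_succ_iff]
      constructor
      · rintro ⟨h1, h2⟩; exact le_antisymm h2 (Order.succ_le_of_lt h1)
      · rintro rfl; exact ⟨Order.lt_succ b, le_rfl⟩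
    exact he ▸ this.mem_nhds (by rw [he]; rfl)
  · exact absurd hl h

theorem ord_Ioc_mem_nhds {a x : Ordinal} (h : a < x) : Set.Ioc a x ∈ nhds x := by
  have : IsOpen (Set.Ioo a (x + 1)) := isOpen_Ioo
  have he : Set.Ioo a (x + 1) = Set.Ioc a x := by
    ext y; simp [Order.lt_add_one_iff]
  exact he ▸ this.mem_nhds (by rw [he]; exact ⟨h, le_rfl⟩)

theorem ord_nhds_basis {x : Ordinal} (hx : Order.IsSuccLimit x) :
    (nhds x).HasBasis (fun a => a < x) (fun a => Set.Ioc a x) := by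
  constructor
  intro t
  constructor
  · intro ht
    obtain ⟨U, hUt, hU, hxU⟩ := mem_nhds_iff.1 ht
    obtain ⟨a, ha, hsub⟩ := (Ordinal.isOpen_iff.1 hU) x hxU hx
    exact ⟨a, ha, fun y hy => by
      rcases eq_or_lt_of_le hy.2 with rfl | hlt
      · exact hUt hxU
      · exact hUt (hsub ⟨hy.1, hlt⟩)⟩
  · rintro ⟨a, ha, hsub⟩
    exact Filter.mem_of_superset (ord_Ioc_mem_nhds ha) hsub

theorem continuous_of_left (g : Set.Iic γ → ℝ)
    (H : ∀ (x₀ : Ordinal) (hx₀ : x₀ ≤ γ), Order.IsSuccLimit x₀ → ∀ ε : ℝ, 0 < ε →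
      ∃ a < x₀, ∀ (x : Ordinal) (hx : x ≤ γ), a < x → x ≤ x₀ →
        |g ⟨x, hx⟩ - g ⟨x₀, hx₀⟩| < ε) :
    Continuous g := by
  rw [continuous_iff_continuousAt]
  rintro ⟨x₀, hx₀⟩
  by_cases hl : Order.IsSuccLimit x₀
  · rw [ContinuousAt, Metric.tendsto_nhds]
    intro ε hε
    obtain ⟨a, ha, hp⟩ := H x₀ hx₀ hl ε hε
    have hmem : Subtype.val ⁻¹' (Set.Ioc a x₀) ∈ nhds (⟨x₀, hx₀⟩ : Set.Iic γ) := by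
      rw [nhds_subtype_eq_comap]
      exact Filter.preimage_mem_comap (ord_Ioc_mem_nhds ha)
    filter_upwards [hmem] with q hq
    rw [Real.dist_eq]
    obtain ⟨x, hx⟩ := q
    exact hp x hx hq.1 hq.2
  · have hmem : ({⟨x₀, hx₀⟩} : Set (Set.Iic γ)) ∈ nhds (⟨x₀, hx₀⟩ : Set.Iic γ) := by
      rw [nhds_subtype_eq_comap]
      refine Filter.mem_of_superset (Filter.preimage_mem_comap (ord_pure_nhds hl)) ?_
      rintro ⟨y, hy⟩ hq
      simp only [Set.mem_preimage, Set.mem_singleton_iff] at hq ⊢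
      exact Subtype.ext hq
    refine Filter.Tendsto.congr' ?_ tendsto_const_nhds
    filter_upwards [hmem] with q hq
    rw [Set.mem_singleton_iff] at hq
    rw [hq]

theorem left_nbhd_of_continuous {g : Set.Iic γ → ℝ} (hg : Continuous g) {x₀ : Ordinal}
    (hx₀ : x₀ ≤ γ) (hl : Order.IsSuccLimit x₀) {ε : ℝ} (hε : 0 < ε) :
    ∃ a < x₀, ∀ (x : Ordinal) (hx : x ≤ γ), a < x → x ≤ x₀ →
      |g ⟨x, hx⟩ - g ⟨x₀, hx₀⟩| < ε := by
  have h1 := Metric.tendsto_nhds.1 (hg.continuousAt (x := ⟨x₀, hx₀⟩)) ε hε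
  erw [nhds_subtype_eq_comap (x := x₀) (h := hx₀), Filter.eventually_comap] at h1
  obtain ⟨V, hV, hsub⟩ := Filter.eventually_iff_exists_mem.1 h1
  obtain ⟨a, ha, haV⟩ := (ord_nhds_basis hl).mem_iff.1 hV
  refine ⟨a, ha, fun x hx h1 h2 => ?_⟩
  have := hsub x (haV ⟨h1, h2⟩) ⟨x, hx⟩ rfl
  rwa [Real.dist_eq] at this

end OrdTopology

theorem one_add_lt_of_isLimit {b r : Ordinal} (hr : Order.IsSuccLimit r) (hb : b < r) : 1 + b < r := by
  rcases lt_or_ge b omega0 with h | h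
  · have h1 : 1 + b < omega0 := by
      rcases lt_omega0.1 h with ⟨n, rfl⟩
      have : ((1 + n : ℕ) : Ordinal) < omega0 := nat_lt_omega0 _
      rwa [Nat.cast_add, Nat.cast_one] at this
    exact h1.trans_le (omega0_le_of_isSuccLimit hr)
  · rw [Ordinal.one_add_of_omega0_le h]
    exact hb

theorem sub_one_of_isLimit {r : Ordinal} (hr : Order.IsSuccLimit r) : r - 1 = r := by
  conv_lhs => rw [← Ordinal.one_add_of_omega0_le (omega0_le_of_isSuccLimit hr)]
  exact Ordinal.add_sub_cancel 1 r

theorem ord_div_eq {α s x : Ordinal} (hα : α ≠ 0) (h1 : α * s ≤ x) (h2 : x < α * Order.succ s) :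
    x / α = s :=
  le_antisymm ((Ordinal.div_le hα).2 h2) ((Ordinal.le_div hα).2 h1)

theorem block_div {α s r : Ordinal} (hα : α ≠ 0) (hr : r < α) : (α * s + r) / α = s :=
  ord_div_eq hα (le_self_add) (by rw [Ordinal.mul_succ]; exact (add_lt_add_iff_left _).2 hr)

theorem block_mod {α s r : Ordinal} (hα : α ≠ 0) (hr : r < α) : (α * s + r) % α = r := by
  rw [Ordinal.mod_def, block_div hα hr, Ordinal.add_sub_cancel]

theorem mul_mod_self' {α s : Ordinal} (hα : α ≠ 0) : (α * s) % α = 0 := by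
  have := block_mod (r := 0) (s := s) hα (pos_iff_ne_zero.2 hα)
  simpa using this

theorem mul_div_self' {α s : Ordinal} (hα : α ≠ 0) : (α * s) / α = s :=
  Ordinal.mul_div_cancel s hα

/-- left-neighborhood transfer across `base + ·`. -/
theorem subL {base c x : Ordinal} (hx : 0 < x) (h : c < base + x) :
    ∃ b < x, ∀ t, b < t → c < base + t := by
  rcases lt_or_ge c base with hc | hc
  · exact ⟨0, hx, fun t _ => hc.trans_le (le_self_add)⟩
  · refine ⟨c - base, ?_, fun t ht => ?_⟩
    · have : base + (c - base) = c := Ordinal.add_sub_cancel_of_le hc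
      rw [← add_lt_add_iff_left base, this]
      exact h
    · have : base + (c - base) = c := Ordinal.add_sub_cancel_of_le hc
      calc c = base + (c - base) := this.symm
        _ < base + t := (add_lt_add_iff_left base).2 ht

theorem div_lt_of_lt_mul' {α s x β : Ordinal} (hα : α ≠ 0) (h : x < α * β) : x / α < β :=
  (Ordinal.div_lt hα).2 h

section CZequivs
variable {S S' : Type*} {X Y : Type*} [NormedAddCommGroup X] [NormedSpace ℝ X]
  [NormedAddCommGroup Y] [NormedSpace ℝ Y]

def czf (F : czero S X) : S → X := ((F : lp (fun _ : S => X) ⊤) : ∀ _ : S, X)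
theorem czf_fin (F : czero S X) {ε : ℝ} (hε : 0 < ε) : {s : S | ε < ‖czf F s‖}.Finite :=
  F.2 ε hε
def czmk (f : S → X) (hb : BddAbove (Set.range fun s => ‖f s‖))
    (hfin : ∀ ε : ℝ, 0 < ε → {s : S | ε < ‖f s‖}.Finite) : czero S X :=
  ⟨⟨f, memℓp_infty hb⟩, hfin⟩
@[simp] theorem czf_czmk (f : S → X) (hb) (hfin) : czf (czmk f hb hfin) = f := rfl
theorem cz_ext {F G : czero S X} (h : ∀ s, czf F s = czf G s) : F = G := by
  apply Subtype.ext; apply Subtype.ext; funext s; exact h s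
theorem czf_add (F G : czero S X) : czf (F + G) = czf F + czf G := rfl
theorem czf_smul (c : ℝ) (F : czero S X) : czf (c • F) = c • czf F := rfl
theorem cz_norm_le (F : czero S X) {C : ℝ} (hC : 0 ≤ C) (h : ∀ s, ‖czf F s‖ ≤ C) :
    ‖F‖ ≤ C := lp.norm_le_of_forall_le hC h
theorem cz_apply_le (F : czero S X) (s : S) : ‖czf F s‖ ≤ ‖F‖ :=
  lp.norm_apply_le_norm (by simp) (F : lp (fun _ : S => X) ⊤) s
theorem cz_bdd (F : czero S X) : BddAbove (Set.range fun s => ‖czf F s‖) :=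
  memℓp_infty_iff.1 (lp.memℓp (F : lp (fun _ : S => X) ⊤))

/-- reindexing along an equiv. -/
def czReindex (e : S ≃ S') : czero S X ≃L[ℝ] czero S' X :=
  have key : ∀ (F : czero S X),
      (BddAbove (Set.range fun s' => ‖czf F (e.symm s')‖)) ∧
      (∀ ε : ℝ, 0 < ε → {s' : S' | ε < ‖czf F (e.symm s')‖}.Finite) := fun F =>
    ⟨⟨‖F‖, by rintro - ⟨s', rfl⟩; exact cz_apply_le F _⟩,
     fun ε hε => show (e.symm ⁻¹' {s : S | ε < ‖czf F s‖}).Finite from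
       (czf_fin F hε).preimage (e.symm.injective.injOn)⟩
  have key' : ∀ (F : czero S' X),
      (BddAbove (Set.range fun s => ‖czf F (e s)‖)) ∧
      (∀ ε : ℝ, 0 < ε → {s : S | ε < ‖czf F (e s)‖}.Finite) := fun F =>
    ⟨⟨‖F‖, by rintro - ⟨s, rfl⟩; exact cz_apply_le F _⟩,
     fun ε hε => show (e ⁻¹' {s : S' | ε < ‖czf F s‖}).Finite from
       (czf_fin F hε).preimage (e.injective.injOn)⟩
  let L : czero S X ≃ₗ[ℝ] czero S' X :=
  { toFun := fun F => czmk (fun s' => czf F (e.symm s')) (key F).1 (key F).2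
    invFun := fun F => czmk (fun s => czf F (e s)) (key' F).1 (key' F).2
    map_add' := fun F G => by apply cz_ext; intro s; simp [czf_add, Pi.add_apply]
    map_smul' := fun c F => by apply cz_ext; intro s; simp [czf_smul, Pi.smul_apply]
    left_inv := fun F => by apply cz_ext; intro s; simp
    right_inv := fun F => by apply cz_ext; intro s; simp }
  L.toContinuousLinearEquivOfBounds 1 1
    (fun F => by rw [one_mul]; exact cz_norm_le _ (norm_nonneg F) (fun s' => cz_apply_le F _))
    (fun F => by rw [one_mul]; exact cz_norm_le _ (norm_nonneg F) (fun s => cz_apply_le F _))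



theorem czCongr_key (e : X →L[ℝ] Y) (F : czero S X) :
    (BddAbove (Set.range fun s => ‖e (czf F s)‖)) ∧
    (∀ ε : ℝ, 0 < ε → {s : S | ε < ‖e (czf F s)‖}.Finite) := by
  have hC : (0:ℝ) < max ‖e‖ 1 := lt_of_lt_of_le one_pos (le_max_right _ 1)
  constructor
  · refine ⟨max ‖e‖ 1 * ‖F‖, ?_⟩
    rintro - ⟨s, rfl⟩
    calc ‖e (czf F s)‖ ≤ ‖e‖ * ‖czf F s‖ := e.le_opNorm _
      _ ≤ max ‖e‖ 1 * ‖F‖ :=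
          mul_le_mul (le_max_left _ _) (cz_apply_le F s) (norm_nonneg _) hC.le
  · intro ε hε
    refine (czf_fin F (div_pos hε hC)).subset ?_
    intro s hs
    simp only [Set.mem_setOf_eq] at hs ⊢
    rw [div_lt_iff₀ hC]
    calc ε < ‖e (czf F s)‖ := hs
      _ ≤ ‖e‖ * ‖czf F s‖ := e.le_opNorm _
      _ ≤ ‖czf F s‖ * max ‖e‖ 1 := by
          rw [mul_comm]
          exact mul_le_mul_of_nonneg_left (le_max_left _ _) (norm_nonneg _)

theorem czCongr_bound (e : X →L[ℝ] Y) (F : czero S X) :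
    ‖czmk (fun s => e (czf F s)) (czCongr_key e F).1 (czCongr_key e F).2‖ ≤
      max ‖e‖ 1 * ‖F‖ := by
  have hC : (0:ℝ) < max ‖e‖ 1 := lt_of_lt_of_le one_pos (le_max_right _ 1)
  refine cz_norm_le _ (mul_nonneg hC.le (norm_nonneg F)) (fun s => ?_)
  calc ‖e (czf F s)‖ ≤ ‖e‖ * ‖czf F s‖ := e.le_opNorm _
    _ ≤ max ‖e‖ 1 * ‖F‖ :=
        mul_le_mul (le_max_left _ _) (cz_apply_le F s) (norm_nonneg _) hC.le

/-- applying an equivalence coordinatewise. -/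
def czCongr (e : X ≃L[ℝ] Y) : czero S X ≃L[ℝ] czero S Y :=
  let L : czero S X ≃ₗ[ℝ] czero S Y :=
  { toFun := fun F => czmk (fun s => (e : X →L[ℝ] Y) (czf F s))
      (czCongr_key (e : X →L[ℝ] Y) F).1 (czCongr_key (e : X →L[ℝ] Y) F).2
    invFun := fun F => czmk (fun s => (e.symm : Y →L[ℝ] X) (czf F s))
      (czCongr_key (e.symm : Y →L[ℝ] X) F).1 (czCongr_key (e.symm : Y →L[ℝ] X) F).2
    map_add' := fun F G => by apply cz_ext; intro s; simp [czf_add, Pi.add_apply]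
    map_smul' := fun c F => by apply cz_ext; intro s; simp [czf_smul, Pi.smul_apply]
    left_inv := fun F => by apply cz_ext; intro s; simp
    right_inv := fun F => by apply cz_ext; intro s; simp }
  L.toContinuousLinearEquivOfBounds (max ‖(e : X →L[ℝ] Y)‖ 1) (max ‖(e.symm : Y →L[ℝ] X)‖ 1)
    (fun F => czCongr_bound (e : X →L[ℝ] Y) F)
    (fun F => czCongr_bound (e.symm : Y →L[ℝ] X) F)

theorem czFlatten_keyf (G : czero S (czero S' X)) :
    (BddAbove (Set.range fun p : S × S' => ‖czf (czf G p.1) p.2‖)) ∧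
    (∀ ε : ℝ, 0 < ε → {p : S × S' | ε < ‖czf (czf G p.1) p.2‖}.Finite) := by
  constructor
  · refine ⟨‖G‖, ?_⟩
    rintro - ⟨p, rfl⟩
    exact le_trans (cz_apply_le _ _) (cz_apply_le G p.1)
  · intro ε hε
    refine ((czf_fin G hε).biUnion
      (fun s _ => ((czf_fin (czf G s) hε).image (fun s' => (s, s'))))).subset ?_
    intro p hp
    simp only [Set.mem_setOf_eq] at hp
    refine Set.mem_biUnion (show p.1 ∈ {s : S | ε < ‖czf G s‖} from
      lt_of_lt_of_le hp (cz_apply_le _ _)) ?_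
    exact ⟨p.2, hp, rfl⟩

theorem czFlatten_keyb1 (F : czero (S × S') X) (s : S) :
    (BddAbove (Set.range fun s' => ‖czf F (s, s')‖)) ∧
    (∀ ε : ℝ, 0 < ε → {s' : S' | ε < ‖czf F (s, s')‖}.Finite) := by
  constructor
  · refine ⟨‖F‖, ?_⟩
    rintro - ⟨s', rfl⟩
    exact cz_apply_le F _
  · intro ε hε
    exact show ((fun s' : S' => (s, s')) ⁻¹' {p : S × S' | ε < ‖czf F p‖}).Finite from
      (czf_fin F hε).preimage (Function.Injective.injOn (fun a b hab => (Prod.ext_iff.1 hab).2))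

theorem czFlatten_keyb (F : czero (S × S') X) :
    (BddAbove (Set.range fun s =>
      ‖czmk (fun s' => czf F (s, s')) (czFlatten_keyb1 F s).1 (czFlatten_keyb1 F s).2‖)) ∧
    (∀ ε : ℝ, 0 < ε → {s : S |
      ε < ‖czmk (fun s' => czf F (s, s'))
        (czFlatten_keyb1 F s).1 (czFlatten_keyb1 F s).2‖}.Finite) := by
  constructor
  · refine ⟨‖F‖, ?_⟩
    rintro - ⟨s, rfl⟩
    exact cz_norm_le _ (norm_nonneg F) (fun s' => cz_apply_le F _)
  · intro ε hε
    refine ((czf_fin F hε).image Prod.fst).subset ?_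
    intro s hs
    simp only [Set.mem_setOf_eq] at hs
    by_contra hc
    have hall : ∀ s', ‖czf F (s, s')‖ ≤ ε := by
      intro s'
      by_contra h2
      push_neg at h2
      exact hc ⟨(s, s'), h2, rfl⟩
    exact absurd (cz_norm_le _ hε.le hall) (not_le.2 hs)

/-- flattening a double c₀-sum. -/
def czFlatten : czero S (czero S' X) ≃L[ℝ] czero (S × S') X :=
  let L : czero S (czero S' X) ≃ₗ[ℝ] czero (S × S') X :=
  { toFun := fun G => czmk (fun p : S × S' => czf (czf G p.1) p.2)
      (czFlatten_keyf G).1 (czFlatten_keyf G).2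
    invFun := fun F => czmk (fun s => czmk (fun s' => czf F (s, s'))
      (czFlatten_keyb1 F s).1 (czFlatten_keyb1 F s).2) (czFlatten_keyb F).1 (czFlatten_keyb F).2
    map_add' := fun F G => by apply cz_ext; intro p; simp [czf_add, Pi.add_apply]
    map_smul' := fun c F => by apply cz_ext; intro p; simp [czf_smul, Pi.smul_apply]
    left_inv := fun G => by
      apply cz_ext; intro s; apply cz_ext; intro s'; rfl
    right_inv := fun F => by apply cz_ext; intro p; rfl }
  L.toContinuousLinearEquivOfBounds 1 1
    (fun G => by
      rw [one_mul]
      exact cz_norm_le _ (norm_nonneg G)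
        (fun p => le_trans (cz_apply_le (czf G p.1) p.2) (cz_apply_le G p.1)))
    (fun F => by
      rw [one_mul]
      exact cz_norm_le _ (norm_nonneg F)
        (fun s => cz_norm_le _ (norm_nonneg F) (fun s' => cz_apply_le F _)))

theorem czSplit_keyf (F : czero (Option S) X) :
    (BddAbove (Set.range fun s => ‖czf F (some s)‖)) ∧
    (∀ ε : ℝ, 0 < ε → {s : S | ε < ‖czf F (some s)‖}.Finite) := by
  constructor
  · refine ⟨‖F‖, ?_⟩
    rintro - ⟨s, rfl⟩
    exact cz_apply_le F _
  · intro ε hε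
    exact show ((fun s : S => some s) ⁻¹' {o : Option S | ε < ‖czf F o‖}).Finite from
      (czf_fin F hε).preimage (Option.some_injective S).injOn

theorem czSplit_keyb (p : czero S X × X) :
    (BddAbove (Set.range fun o : Option S => ‖Option.elim o p.2 (czf p.1)‖)) ∧
    (∀ ε : ℝ, 0 < ε → {o : Option S | ε < ‖Option.elim o p.2 (czf p.1)‖}.Finite) := by
  constructor
  · refine ⟨max ‖p.1‖ ‖p.2‖, ?_⟩
    rintro - ⟨o, rfl⟩
    rcases o with _ | s
    · exact le_max_of_le_right (le_refl _)
    · exact le_max_of_le_left (cz_apply_le p.1 s)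
  · intro ε hε
    refine (Set.Finite.insert none ((czf_fin p.1 hε).image some)).subset ?_
    intro o ho
    rcases o with _ | s
    · exact Set.mem_insert _ _
    · exact Set.mem_insert_of_mem _ ⟨s, ho, rfl⟩

/-- splitting off the `none` coordinate. -/
def czSplit : czero (Option S) X ≃L[ℝ] (czero S X) × X :=
  let L : czero (Option S) X ≃ₗ[ℝ] (czero S X) × X :=
  { toFun := fun F => (czmk (fun s => czf F (some s)) (czSplit_keyf F).1 (czSplit_keyf F).2,
      czf F none)
    invFun := fun p => czmk (fun o => Option.elim o p.2 (czf p.1))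
      (czSplit_keyb p).1 (czSplit_keyb p).2
    map_add' := fun F G => by
      refine Prod.ext ?_ rfl
      apply cz_ext; intro s; simp [czf_add, Pi.add_apply]
    map_smul' := fun c F => by
      refine Prod.ext ?_ rfl
      apply cz_ext; intro s; simp [czf_smul, Pi.smul_apply]
    left_inv := fun F => by
      apply cz_ext; intro o
      rcases o with _ | s <;> rfl
    right_inv := fun p => by
      refine Prod.ext ?_ rfl
      apply cz_ext; intro s; rfl }
  L.toContinuousLinearEquivOfBounds 1 1
    (fun F => by
      rw [one_mul, Prod.norm_def]
      exact max_le (cz_norm_le _ (norm_nonneg F) (fun s => cz_apply_le F _))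
        (cz_apply_le F none))
    (fun p => by
      rw [one_mul]
      refine cz_norm_le _ (norm_nonneg p) (fun o => ?_)
      rcases o with _ | s
      · exact le_trans (le_max_right ‖p.1‖ ‖p.2‖) (le_of_eq (Prod.norm_def p).symm)
      · exact le_trans (le_trans (cz_apply_le p.1 s) (le_max_left ‖p.1‖ ‖p.2‖))
          (le_of_eq (Prod.norm_def p).symm))

end CZequivs

section C0API
variable {γ : Ordinal}
def C0f (F : Czero γ) : Set.Iic γ → ℝ := F.1
def C0mk (f : Set.Iic γ → ℝ) (hc : Continuous f) (h0 : f ⟨γ, Set.self_mem_Iic⟩ = 0) :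
    Czero γ := ⟨⟨f, hc⟩, h0⟩
@[simp] theorem C0f_C0mk (f : Set.Iic γ → ℝ) (hc) (h0) : C0f (C0mk f hc h0) = f := rfl
theorem C0_ext {F G : Czero γ} (h : ∀ x, C0f F x = C0f G x) : F = G :=
  Subtype.ext (ContinuousMap.ext h)
theorem C0_zero_at_top (F : Czero γ) : C0f F ⟨γ, Set.self_mem_Iic⟩ = 0 := F.2
theorem C0_apply_le (F : Czero γ) (x : Set.Iic γ) : |C0f F x| ≤ ‖F‖ := by
  have := ContinuousMap.norm_coe_le_norm F.1 x
  rwa [Real.norm_eq_abs] at this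
theorem C0_norm_le (F : Czero γ) {C : ℝ} (hC : 0 ≤ C) (h : ∀ x, |C0f F x| ≤ C) :
    ‖F‖ ≤ C := by
  refine (ContinuousMap.norm_le _ hC).2 (fun x => ?_)
  rw [Real.norm_eq_abs]; exact h x
theorem C0_cont (F : Czero γ) : Continuous (C0f F) := F.1.continuous
end C0API


-- ===================== block decomposition ======================
section Block
variable {α β : Ordinal}

theorem α_ne (hα : Order.IsSuccLimit α) : α ≠ 0 := hα.pos.ne'
theorem one_add_le (hα : Order.IsSuccLimit α) {t : Ordinal} (ht : t ≤ α) : 1 + t ≤ α := by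
  calc 1 + t ≤ 1 + α := add_le_add_right ht 1
    _ = α := Ordinal.one_add_of_omega0_le (omega0_le_of_isSuccLimit hα)

theorem blk_le (hα : Order.IsSuccLimit α) {s t : Ordinal} (hs : s < β) (ht : t ≤ α) :
    (α * s + 1) + t ≤ α * β := by
  have h1 : (α * s + 1) + t = α * s + (1 + t) := by rw [add_assoc]
  rw [h1]
  calc α * s + (1 + t) ≤ α * s + α := add_le_add_right (one_add_le hα ht) _
    _ = α * Order.succ s := (Ordinal.mul_succ α s).symm
    _ ≤ α * β := mul_le_mul_right (Order.succ_le_of_lt hs) α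

theorem blk_top_le {s : Ordinal} (hs : s < β) : α * Order.succ s ≤ α * β :=
  mul_le_mul_right (Order.succ_le_of_lt hs) α

/-- trace function on multiples of `α`. -/
def uFun (f : Czero (α * β)) : Set.Iic β → ℝ := fun s =>
  C0f f ⟨α * s.1, mul_le_mul_right s.2 α⟩

theorem uFun_cont (f : Czero (α * β)) (hα : Order.IsSuccLimit α) : Continuous (uFun f) := by
  apply continuous_of_left
  intro s₀ hs₀ hl ε hε
  obtain ⟨a, ha, key⟩ := left_nbhd_of_continuous (C0_cont f)
    (mul_le_mul_right hs₀ α) (isSuccLimit_mul_right hα.pos hl) hε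
  obtain ⟨a₁, ha₁, ha₁'⟩ := (lt_mul_iff_of_isSuccLimit hl).1 ha
  refine ⟨a₁, ha₁, fun s hs h1 h2 => ?_⟩
  exact key (α * s) (mul_le_mul_right hs α)
    (ha₁'.trans_le (mul_le_mul_right h1.le α)) (mul_le_mul_right h2 α)

def uPart (f : Czero (α * β)) (hα : Order.IsSuccLimit α) : Czero β :=
  C0mk (uFun f) (uFun_cont f hα) (by
    show C0f f _ = 0
    have := C0_zero_at_top f
    convert this using 2)

/-- the block function at index `s`. -/
def hElemFun (hα : Order.IsSuccLimit α) (f : Czero (α * β)) (s : ↥(Set.Iio β)) : Set.Iic α → ℝ :=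
  fun t => C0f f ⟨(α * s.1 + 1) + t.1, blk_le hα s.2 t.2⟩ -
    C0f f ⟨α * Order.succ s.1, blk_top_le s.2⟩

theorem hElemFun_cont (hα : Order.IsSuccLimit α) (f : Czero (α * β)) (s : ↥(Set.Iio β)) :
    Continuous (hElemFun hα f s) := by
  apply continuous_of_left
  intro t₀ ht₀ hl ε hε
  obtain ⟨a, ha, key⟩ := left_nbhd_of_continuous (C0_cont f)
    (blk_le hα s.2 ht₀) (Ordinal.isSuccLimit_add _ hl) hε
  obtain ⟨b, hb, hbkey⟩ := subL hl.pos ha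
  refine ⟨b, hb, fun t ht h1 h2 => ?_⟩
  have hk := key ((α * s.1 + 1) + t) (blk_le hα s.2 ht) (hbkey t h1)
    (add_le_add_right h2 _)
  show |(C0f f _ - C0f f _) - (C0f f _ - C0f f _)| < ε
  rw [sub_sub_sub_cancel_right]
  exact hk

theorem hElemFun_zero (hα : Order.IsSuccLimit α) (f : Czero (α * β)) (s : ↥(Set.Iio β)) :
    hElemFun hα f s ⟨α, Set.self_mem_Iic⟩ = 0 := by
  have hv : (α * s.1 + 1) + α = α * Order.succ s.1 := by
    rw [add_assoc, Ordinal.one_add_of_omega0_le (omega0_le_of_isSuccLimit hα),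
      ← Ordinal.mul_succ]
  show C0f f _ - C0f f _ = 0
  rw [sub_eq_zero]
  congr 1
  exact Subtype.ext hv

def hElem (hα : Order.IsSuccLimit α) (f : Czero (α * β)) (s : ↥(Set.Iio β)) : Czero α :=
  C0mk (hElemFun hα f s) (hElemFun_cont hα f s) (hElemFun_zero hα f s)

theorem hElem_norm_le (hα : Order.IsSuccLimit α) (f : Czero (α * β)) (s : ↥(Set.Iio β)) :
    ‖hElem hα f s‖ ≤ 2 * ‖f‖ := by
  refine C0_norm_le _ (by positivity) (fun t => ?_)
  show |C0f f _ - C0f f _| ≤ 2 * ‖f‖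
  calc |C0f f _ - C0f f _| ≤ |C0f f _| + |C0f f _| := abs_sub _ _
    _ ≤ ‖f‖ + ‖f‖ := add_le_add (C0_apply_le f _) (C0_apply_le f _)
    _ = 2 * ‖f‖ := by ring

theorem hPart_fin (hα : Order.IsSuccLimit α) (f : Czero (α * β)) {ε : ℝ} (hε : 0 < ε) :
    {s : ↥(Set.Iio β) | ε < ‖hElem hα f s‖}.Finite := by
  by_contra hinf
  have hT : {s : ↥(Set.Iio β) | ε < ‖hElem hα f s‖}.Infinite := hinf
  set T' : Set Ordinal := Subtype.val '' {s : ↥(Set.Iio β) | ε < ‖hElem hα f s‖} with hT'def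
  have hT' : T'.Infinite := hT.image Subtype.val_injective.injOn
  have hT'β : T' ⊆ Set.Iio β := by rintro - ⟨⟨c, hc⟩, -, rfl⟩; exact hc
  set S0 : Set Ordinal := {c : Ordinal | (T' ∩ Set.Iio c).Infinite} with hS0def
  have hβS0 : β ∈ S0 := by
    show (T' ∩ Set.Iio β).Infinite
    rwa [Set.inter_eq_self_of_subset_left hT'β]
  set σ := sInf S0 with hσdef
  have hσS0 : σ ∈ S0 := csInf_mem ⟨β, hβS0⟩
  have hσβ : σ ≤ β := csInf_le' hβS0
  have hnot : ∀ c, c < σ → (T' ∩ Set.Iio c).Finite := by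
    intro c hc
    by_contra hfin
    exact absurd (csInf_le' (show c ∈ S0 from hfin)) (not_le.2 hc)
  have hσl : Order.IsSuccLimit σ := by
    rcases Ordinal.zero_or_succ_or_isSuccLimit σ with h | ⟨c, hc⟩ | h
    · exfalso
      apply hσS0
      refine Set.Finite.subset Set.finite_empty (fun x hx => ?_)
      rw [h] at hx
      exact absurd (Set.mem_Iio.1 hx.2) not_lt_zero
    · exfalso
      replace hc := hc.symm
      have hcσ : c < σ := by rw [hc]; exact Order.lt_succ c
      apply hσS0
      rw [hc]
      refine ((hnot c hcσ).insert c).subset (fun x hx => ?_)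
      obtain ⟨hx1, hx2⟩ := hx
      rw [Set.mem_Iio, Order.lt_succ_iff] at hx2
      rcases lt_or_eq_of_le hx2 with h' | h'
      · exact Set.mem_insert_of_mem _ ⟨hx1, h'⟩
      · rw [h']; exact Set.mem_insert _ _
    · exact h
  have hclose : ∀ a, a < σ → ∃ x ∈ T', a < x ∧ x < σ := by
    intro a haσ
    have hfin := hnot (Order.succ a) (hσl.succ_lt haσ)
    have hne := ((hσS0).diff hfin).nonempty
    obtain ⟨x, hx1, hx2⟩ := hne
    refine ⟨x, hx1.1, ?_, hx1.2⟩
    by_contra hle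
    push_neg at hle
    exact hx2 ⟨hx1.1, Order.lt_succ_iff.2 hle⟩
  obtain ⟨a, ha, key⟩ := left_nbhd_of_continuous (C0_cont f)
    (mul_le_mul_right hσβ α) (isSuccLimit_mul_right hα.pos hσl) (half_pos hε)
  obtain ⟨s₁, hs₁, hs₁'⟩ := (lt_mul_iff_of_isSuccLimit hσl).1 ha
  obtain ⟨sv, hsvT, hs₁s, hsσ⟩ := hclose s₁ hs₁
  obtain ⟨sd, hsdT, rfl⟩ := hsvT
  simp only [Set.mem_setOf_eq] at hsdT
  refine absurd hsdT (not_lt.2 ?_)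
  show ‖hElem hα f sd‖ ≤ ε
  refine C0_norm_le _ hε.le (fun t => ?_)
  show |C0f f ⟨(α * sd.1 + 1) + t.1, _⟩ - C0f f ⟨α * Order.succ sd.1, _⟩| ≤ ε
  have hx1a : a < (α * sd.1 + 1) + t.1 := by
    have h1 : a < α * sd.1 := hs₁'.trans_le (mul_lt_mul_of_pos_left hs₁s hα.pos).le
    exact h1.trans_le (le_self_add.trans le_self_add)
  have hx1σ : (α * sd.1 + 1) + t.1 ≤ α * σ := blk_le (β := σ) hα hsσ t.2
  have hx2a : a < α * Order.succ sd.1 := by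
    refine hs₁'.trans_le (mul_le_mul_right ?_ α)
    exact (Order.le_succ s₁).trans (Order.succ_le_succ hs₁s.le)
  have hx2σ : α * Order.succ sd.1 ≤ α * σ := mul_le_mul_right (hσl.succ_lt hsσ).le α
  have k1 := key _ (blk_le hα sd.2 t.2) hx1a hx1σ
  have k2 := key _ (blk_top_le sd.2) hx2a hx2σ
  calc |C0f f _ - C0f f _| ≤
      |C0f f _ - C0f f ⟨α * σ, mul_le_mul_right hσβ α⟩| +
      |C0f f ⟨α * σ, mul_le_mul_right hσβ α⟩ - C0f f _| := abs_sub_le _ _ _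
    _ ≤ ε/2 + ε/2 := by
        refine add_le_add k1.le ?_
        rw [abs_sub_comm]
        exact k2.le
    _ = ε := by ring

def hPart (hα : Order.IsSuccLimit α) (f : Czero (α * β)) : czero ↥(Set.Iio β) (Czero α) :=
  czmk (hElem hα f)
    ⟨2 * ‖f‖, by rintro - ⟨s, rfl⟩; exact hElem_norm_le hα f s⟩
    (fun ε hε => hPart_fin hα f hε)

-- ===== backward =====
theorem bdiv_le {x : Ordinal} (hα : Order.IsSuccLimit α) (hx : x ≤ α * β) : x / α ≤ β :=
  Ordinal.div_le_of_le_mul hx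

theorem bdiv_lt {x : Ordinal} (hα : Order.IsSuccLimit α) (hx : x ≤ α * β) (h0 : x % α ≠ 0) :
    x / α < β := by
  rcases lt_or_eq_of_le (bdiv_le hα hx) with h | h
  · exact h
  · exfalso
    apply h0
    have h1 : α * β ≤ x := by
      calc α * β = α * (x / α) := by rw [h]
        _ ≤ x := Ordinal.mul_div_le x α
    have h2 : x = α * β := le_antisymm hx h1
    rw [h2, mul_mod_self' (α_ne hα)]

theorem bmod_le {x : Ordinal} (hα : Order.IsSuccLimit α) : x % α - 1 ≤ α :=
  (Ordinal.sub_le_self _ _).trans (Ordinal.mod_lt x (α_ne hα)).le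

def bFun (hα : Order.IsSuccLimit α) (H : czero ↥(Set.Iio β) (Czero α)) (u : Czero β) :
    Set.Iic (α * β) → ℝ := fun x =>
  if h0 : x.1 % α = 0 then C0f u ⟨x.1 / α, bdiv_le hα x.2⟩
  else C0f (czf H ⟨x.1 / α, bdiv_lt hα x.2 h0⟩) ⟨x.1 % α - 1, bmod_le hα⟩ +
    C0f u ⟨Order.succ (x.1 / α), Order.succ_le_of_lt (bdiv_lt hα x.2 h0)⟩

theorem C0f_congr {γ : Ordinal} {F G : Czero γ} (h : F = G) {p q : Set.Iic γ}
    (hpq : p.1 = q.1) : C0f F p = C0f G q := by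
  subst h
  exact congrArg (C0f F) (Subtype.ext hpq)

theorem inner_le (hα : Order.IsSuccLimit α) {s r : Ordinal} (hs : s < β) (hr : r < α) :
    α * s + r ≤ α * β :=
  le_trans (add_le_add_right hr.le _) (by rw [← Ordinal.mul_succ]; exact blk_top_le hs)

theorem bFun_at_mul (hα : Order.IsSuccLimit α) (H : czero ↥(Set.Iio β) (Czero α)) (u : Czero β)
    {s : Ordinal} (hs : s ≤ β) :
    bFun hα H u ⟨α * s, mul_le_mul_right hs α⟩ = C0f u ⟨s, hs⟩ := by
  rw [bFun, dif_pos (mul_mod_self' (α_ne hα))]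
  congr 1
  exact Subtype.ext (mul_div_self' (α_ne hα))

theorem bFun_at_inner (hα : Order.IsSuccLimit α) (H : czero ↥(Set.Iio β) (Czero α)) (u : Czero β)
    {s r : Ordinal} (hs : s < β) (hr0 : r ≠ 0) (hrα : r < α) :
    bFun hα H u ⟨α * s + r, inner_le hα hs hrα⟩ =
      C0f (czf H ⟨s, hs⟩) ⟨r - 1, (Ordinal.sub_le_self _ _).trans hrα.le⟩ +
      C0f u ⟨Order.succ s, Order.succ_le_of_lt hs⟩ := by
  have hmod : (α * s + r) % α = r := block_mod (α_ne hα) hrα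
  have hdiv : (α * s + r) / α = s := block_div (α_ne hα) hrα
  rw [bFun, dif_neg (by rw [hmod]; exact hr0)]
  refine congrArg₂ (· + ·) ?_ ?_
  · exact C0f_congr (congrArg (czf H) (Subtype.ext hdiv))
      (show (α * s + r) % α - 1 = r - 1 by rw [hmod])
  · exact C0f_congr rfl
      (show Order.succ ((α * s + r) / α) = Order.succ s by rw [hdiv])

theorem ord_pt_eq {γ : Ordinal} {x y : Ordinal} (hx : x ≤ γ) (h : x = y) (hy : y ≤ γ) :
    (⟨x, hx⟩ : Set.Iic γ) = ⟨y, hy⟩ := Subtype.ext h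

theorem bFun_cont (hα : Order.IsSuccLimit α) (H : czero ↥(Set.Iio β) (Czero α)) (u : Czero β) :
    Continuous (bFun hα H u) := by
  apply continuous_of_left
  intro x₀ hx₀ hl ε hε
  set s₀ := x₀ / α with hs₀def
  set r₀ := x₀ % α with hr₀def
  have hdm : α * s₀ + r₀ = x₀ := Ordinal.div_add_mod x₀ α
  have hs₀β : s₀ ≤ β := bdiv_le hα hx₀
  by_cases h0 : r₀ = 0
  · -- x₀ = α * s₀
    have hx0eq : α * s₀ = x₀ := by rw [← hdm, h0, add_zero]
    have hs₀0 : s₀ ≠ 0 := by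
      rintro h
      rw [h, mul_zero] at hx0eq
      exact hl.pos.ne' hx0eq.symm
    rcases Ordinal.zero_or_succ_or_isSuccLimit s₀ with h | ⟨p, hp⟩ | hs₀l
    · exact absurd h hs₀0
    · -- case (iii) : s₀ = succ p, x₀ is top of block p
      replace hp := hp.symm
      have hpβ : p < β := by
        have : Order.succ p ≤ β := by rw [← hp]; exact hs₀β
        exact lt_of_lt_of_le (Order.lt_succ p) this
      have hHp0 : C0f (czf H ⟨p, hpβ⟩) ⟨α, (le_rfl : α ≤ α)⟩ = 0 :=
        (C0f_congr rfl rfl).trans (C0_zero_at_top _)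
      obtain ⟨b, hb, key⟩ := left_nbhd_of_continuous (C0_cont (czf H ⟨p, hpβ⟩))
        (le_rfl : α ≤ α) hα hε
      have h1b : 1 + b < α := one_add_lt_of_isLimit hα hb
      refine ⟨α * p + (1 + b), ?_, fun x hx hax hxx₀ => ?_⟩
      · rw [← hx0eq, hp, Ordinal.mul_succ]
        exact (add_lt_add_iff_left _).2 h1b
      rcases eq_or_lt_of_le hxx₀ with rfl | hxlt
      · simpa using hε
      -- x is inside block p
      have hxge : α * p ≤ x := le_of_lt (lt_of_le_of_lt (le_self_add) hax)
      have hxlt' : x < α * Order.succ p := by rwa [← hp, hx0eq]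
      have hdivx : x / α = p := ord_div_eq (α_ne hα) hxge hxlt'
      have hdmx : α * p + x % α = x := by
        conv_rhs => rw [← Ordinal.div_add_mod x α]
        rw [hdivx]
      set r := x % α with hrdef
      have hrα : r < α := Ordinal.mod_lt x (α_ne hα)
      have hrb : 1 + b < r := by
        rw [← hdmx] at hax
        exact (add_lt_add_iff_left _).1 hax
      have hr0 : r ≠ 0 := by
        rintro h
        rw [h] at hrb
        exact absurd hrb not_lt_zero
      have h1r : (1 : Ordinal) ≤ r := Ordinal.one_le_iff_ne_zero.2 hr0
      have h1r' : 1 + (r - 1) = r := Ordinal.add_sub_cancel_of_le h1r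
      have htb : b < r - 1 := by
        have := hrb
        rw [← h1r'] at this
        exact (add_lt_add_iff_left _).1 this
      have htα : r - 1 ≤ α := (Ordinal.sub_le_self _ _).trans hrα.le
      -- rewrite bFun x
      have hx_pt : (⟨x, hx⟩ : Set.Iic (α * β)) = ⟨α * p + r, inner_le hα hpβ hrα⟩ :=
        ord_pt_eq _ hdmx.symm _
      have hx₀_pt : (⟨x₀, hx₀⟩ : Set.Iic (α * β)) =
          ⟨α * Order.succ p, mul_le_mul_right (by rw [← hp]; exact hs₀β) α⟩ := by
        refine ord_pt_eq _ ?_ _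
        rw [← hx0eq, hp]
      rw [hx_pt, hx₀_pt, bFun_at_inner hα H u hpβ hr0 hrα]
      have hval : bFun hα H u ⟨α * Order.succ p,
          mul_le_mul_right (by rw [← hp]; exact hs₀β) α⟩ =
          C0f u ⟨Order.succ p, by rw [← hp]; exact hs₀β⟩ :=
        bFun_at_mul hα H u _
      rw [hval]
      have hcancel : ∀ A B : ℝ, |A + B - B| = |A| := fun A B => by rw [add_sub_cancel_right]
      have hupt : (⟨Order.succ p, Order.succ_le_of_lt hpβ⟩ : Set.Iic β) =
          ⟨Order.succ p, by rw [← hp]; exact hs₀β⟩ := rfl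
      rw [hupt, hcancel]
      have hkey := key (r - 1) htα htb htα
      have habs : |C0f (czf H ⟨p, hpβ⟩) ⟨r - 1, htα⟩| =
          |C0f (czf H ⟨p, hpβ⟩) ⟨r - 1, htα⟩ -
            C0f (czf H ⟨p, hpβ⟩) ⟨α, (le_rfl : α ≤ α)⟩| := by
        rw [hHp0]
        simp
      exact lt_of_le_of_lt habs.le hkey
    · -- case (ii) : s₀ is a limit
      have hx₀val : (⟨x₀, hx₀⟩ : Set.Iic (α * β)) =
          ⟨α * s₀, mul_le_mul_right hs₀β α⟩ := ord_pt_eq _ hx0eq.symm _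
      obtain ⟨a', ha', keyU⟩ := left_nbhd_of_continuous (C0_cont u) hs₀β hs₀l
        (half_pos hε)
      -- bound for the c₀ part
      have hFfin : ((Subtype.val '' {sd : ↥(Set.Iio β) | ε/2 < ‖czf H sd‖}) ∩
          Set.Iio s₀).Finite := ((czf_fin H (half_pos hε)).image _).inter_of_left _
      set K := insert (0 : Ordinal) ((Subtype.val '' {sd : ↥(Set.Iio β) | ε/2 < ‖czf H sd‖})
        ∩ Set.Iio s₀) with hKdef
      have hKfin : K.Finite := hFfin.insert 0
      have hKne : K.Nonempty := ⟨0, Set.mem_insert _ _⟩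
      set a'' := sSup K with ha''def
      have ha''K : a'' ∈ K := Set.Nonempty.csSup_mem hKne hKfin
      have ha''σ : a'' < s₀ := by
        rcases ha''K with h | h
        · rw [h]; exact hs₀l.pos
        · exact h.2
      have hbound : ∀ c, c ∈ (Subtype.val '' {sd : ↥(Set.Iio β) | ε/2 < ‖czf H sd‖}) →
          c < s₀ → c ≤ a'' := fun c h1 h2 =>
        le_csSup hKfin.bddAbove (Set.mem_insert_of_mem _ ⟨h1, h2⟩)
      set a₃ := max a' a'' with ha₃def
      have ha₃σ : a₃ < s₀ := max_lt ha' ha''σ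
      refine ⟨α * Order.succ a₃, ?_, fun x hx hax hxx₀ => ?_⟩
      · rw [← hx0eq]
        exact mul_lt_mul_of_pos_left (hs₀l.succ_lt ha₃σ) hα.pos
      set s := x / α with hsdef
      set r := x % α with hrdef
      have hdmx : α * s + r = x := Ordinal.div_add_mod x α
      have hsge : Order.succ a₃ ≤ s := by
        have h1 : α * Order.succ a₃ ≤ x := hax.le
        have := Ordinal.div_le_left h1 α
        rwa [mul_div_self' (α_ne hα)] at this
      have hsle : s ≤ s₀ := by
        have h1 : α * s ≤ α * s₀ := le_trans (Ordinal.mul_div_le x α) (by rwa [hx0eq])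
        exact le_of_mul_le_mul_left h1 hα.pos
      have hrα : r < α := Ordinal.mod_lt x (α_ne hα)
      have ha'lt : a' < s := lt_of_le_of_lt (le_max_left a' a'') (lt_of_lt_of_le
        (Order.lt_succ a₃) hsge)
      by_cases hr0 : r = 0
      · -- x = α * s, a multiple
        have hxeq : α * s = x := by rw [← hdmx, hr0, add_zero]
        have hsβ : s ≤ β := hsle.trans hs₀β
        have hx_pt : (⟨x, hx⟩ : Set.Iic (α * β)) = ⟨α * s, mul_le_mul_right hsβ α⟩ :=
          ord_pt_eq _ hxeq.symm _
        rw [hx_pt, hx₀val, bFun_at_mul hα H u hsβ, bFun_at_mul hα H u hs₀β]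
        exact lt_trans (keyU s hsβ ha'lt hsle) (half_lt_self hε)
      · -- x is inside block s, s < s₀
        have hslt : s < s₀ := by
          rcases lt_or_eq_of_le hsle with h | h
          · exact h
          · exfalso
            have : x₀ < x := by
              calc x₀ = α * s₀ := hx0eq.symm
                _ = α * s + 0 := by rw [h, add_zero]
                _ < α * s + r := (add_lt_add_iff_left _).2 (pos_iff_ne_zero.2 hr0)
                _ = x := hdmx
            exact absurd hxx₀ (not_le.2 this)
        have hsβ : s < β := hslt.trans_le hs₀β
        have hx_pt : (⟨x, hx⟩ : Set.Iic (α * β)) = ⟨α * s + r, inner_le hα hsβ hrα⟩ :=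
          ord_pt_eq _ hdmx.symm _
        rw [hx_pt, hx₀val, bFun_at_inner hα H u hsβ hr0 hrα, bFun_at_mul hα H u hs₀β]
        have hsmall : ‖czf H ⟨s, hsβ⟩‖ ≤ ε/2 := by
          by_contra hc
          push_neg at hc
          have h1 : s ≤ a'' := hbound s ⟨⟨s, hsβ⟩, hc, rfl⟩ hslt
          have h2 : a'' < s := lt_of_lt_of_le
            (lt_of_le_of_lt (le_max_right a' a'') (Order.lt_succ a₃)) hsge
          exact absurd h1 (not_le.2 h2)
        have hH1 : |C0f (czf H ⟨s, hsβ⟩) ⟨r - 1, (Ordinal.sub_le_self _ _).trans hrα.le⟩|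
            ≤ ε/2 := le_trans (C0_apply_le _ _) hsmall
        have hU1 : |C0f u ⟨Order.succ s, Order.succ_le_of_lt hsβ⟩ - C0f u ⟨s₀, hs₀β⟩|
            < ε/2 := keyU (Order.succ s) (Order.succ_le_of_lt hsβ)
            (lt_of_lt_of_le ha'lt (Order.le_succ s))
            (Order.succ_le_of_lt hslt)
        calc |C0f (czf H ⟨s, hsβ⟩) _ + C0f u _ - C0f u _| =
            |C0f (czf H ⟨s, hsβ⟩) _ + (C0f u _ - C0f u _)| := by rw [add_sub_assoc]
          _ ≤ |C0f (czf H ⟨s, hsβ⟩) _| + |C0f u _ - C0f u _| := abs_add_le _ _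
          _ < ε/2 + ε/2 := add_lt_add_of_le_of_lt hH1 hU1
          _ = ε := by ring
  · -- case (i) : r₀ is a limit, x₀ interior to block s₀
    have hr₀α : r₀ < α := Ordinal.mod_lt x₀ (α_ne hα)
    have hr₀l : Order.IsSuccLimit r₀ := by
      rcases Ordinal.zero_or_succ_or_isSuccLimit r₀ with h | ⟨c, hc⟩ | h
      · exact absurd h h0
      · exfalso
        replace hc := hc.symm
        have : x₀ = Order.succ (α * s₀ + c) := by
          rw [← hdm, hc, Ordinal.add_succ]
        exact Order.not_isSuccLimit_succ _ (this ▸ hl)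
      · exact h
    have hs₀β' : s₀ < β := bdiv_lt hα hx₀ h0
    have hr₀1 : r₀ - 1 = r₀ := sub_one_of_isLimit hr₀l
    obtain ⟨b, hb, key⟩ := left_nbhd_of_continuous (C0_cont (czf H ⟨s₀, hs₀β'⟩))
      hr₀α.le hr₀l hε
    have h1b : 1 + b < r₀ := one_add_lt_of_isLimit hr₀l hb
    refine ⟨α * s₀ + (1 + b), ?_, fun x hx hax hxx₀ => ?_⟩
    · rw [← hdm]
      exact (add_lt_add_iff_left _).2 h1b
    have hxge : α * s₀ ≤ x := le_of_lt (lt_of_le_of_lt (le_self_add) hax)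
    have hxlt' : x < α * Order.succ s₀ := by
      rw [Ordinal.mul_succ]
      calc x ≤ x₀ := hxx₀
        _ = α * s₀ + r₀ := hdm.symm
        _ < α * s₀ + α := (add_lt_add_iff_left _).2 hr₀α
    have hdivx : x / α = s₀ := ord_div_eq (α_ne hα) hxge hxlt'
    have hdmx : α * s₀ + x % α = x := by
      conv_rhs => rw [← Ordinal.div_add_mod x α]
      rw [hdivx]
    set r := x % α with hrdef
    have hrα : r < α := Ordinal.mod_lt x (α_ne hα)
    have hrb : 1 + b < r := by
      rw [← hdmx] at hax
      exact (add_lt_add_iff_left _).1 hax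
    have hrr₀ : r ≤ r₀ := by
      have : α * s₀ + r ≤ α * s₀ + r₀ := by rw [hdmx, hdm]; exact hxx₀
      exact (add_le_add_iff_left _).1 this
    have hr0 : r ≠ 0 := by
      rintro h
      rw [h] at hrb
      exact absurd hrb not_lt_zero
    have h1r : (1 : Ordinal) ≤ r := Ordinal.one_le_iff_ne_zero.2 hr0
    have h1r' : 1 + (r - 1) = r := Ordinal.add_sub_cancel_of_le h1r
    have htb : b < r - 1 := by
      have := hrb
      rw [← h1r'] at this
      exact (add_lt_add_iff_left _).1 this
    have htr₀ : r - 1 ≤ r₀ := le_trans (Ordinal.sub_le_self _ _) hrr₀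
    have htα : r - 1 ≤ α := (Ordinal.sub_le_self _ _).trans hrα.le
    have hx_pt : (⟨x, hx⟩ : Set.Iic (α * β)) = ⟨α * s₀ + r, inner_le hα hs₀β' hrα⟩ :=
      ord_pt_eq _ hdmx.symm _
    have hx₀_pt : (⟨x₀, hx₀⟩ : Set.Iic (α * β)) = ⟨α * s₀ + r₀, inner_le hα hs₀β' hr₀α⟩ :=
      ord_pt_eq _ hdm.symm _
    rw [hx_pt, hx₀_pt, bFun_at_inner hα H u hs₀β' hr0 hrα,
      bFun_at_inner hα H u hs₀β' h0 hr₀α]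
    have hcancel : ∀ A B C : ℝ, A + C - (B + C) = A - B := fun A B C => by ring
    rw [hcancel]
    have hpt : (⟨r₀ - 1, (Ordinal.sub_le_self _ _).trans hr₀α.le⟩ : Set.Iic α) =
        ⟨r₀, hr₀α.le⟩ := Subtype.ext hr₀1
    rw [hpt]
    exact key (r - 1) htα htb htr₀

theorem bFun_top (hα : Order.IsSuccLimit α) (H : czero ↥(Set.Iio β) (Czero α)) (u : Czero β) :
    bFun hα H u ⟨α * β, Set.self_mem_Iic⟩ = 0 := by
  have h0 : (α * β) % α = 0 := mul_mod_self' (α_ne hα)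
  rw [bFun, dif_pos h0]
  have hd : (α * β) / α = β := mul_div_self' (α_ne hα)
  have : (⟨α * β / α, bdiv_le hα le_rfl⟩ : Set.Iic β) = ⟨β, Set.self_mem_Iic⟩ :=
    Subtype.ext hd
  rw [this]
  exact C0_zero_at_top u

def bPart (hα : Order.IsSuccLimit α) (H : czero ↥(Set.Iio β) (Czero α)) (u : Czero β) :
    Czero (α * β) :=
  C0mk (bFun hα H u) (bFun_cont hα H u) (bFun_top hα H u)



@[simp] theorem C0f_add {γ : Ordinal} (F G : Czero γ) (x) :
    C0f (F + G) x = C0f F x + C0f G x := rfl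
@[simp] theorem C0f_smul {γ : Ordinal} (c : ℝ) (F : Czero γ) (x) :
    C0f (c • F) x = c * C0f F x := rfl
theorem hPart_czf (hα : Order.IsSuccLimit α) (f : Czero (α * β)) :
    czf (hPart hα f) = hElem hα f := rfl
theorem hElem_apply (hα : Order.IsSuccLimit α) (f : Czero (α * β)) (s : ↥(Set.Iio β))
    (t : Set.Iic α) : C0f (hElem hα f s) t =
      C0f f ⟨(α * s.1 + 1) + t.1, blk_le hα s.2 t.2⟩ -
      C0f f ⟨α * Order.succ s.1, blk_top_le s.2⟩ := rfl
theorem uPart_apply (hα : Order.IsSuccLimit α) (f : Czero (α * β)) (s : Set.Iic β) :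
    C0f (uPart f hα) s = C0f f ⟨α * s.1, mul_le_mul_right s.2 α⟩ := rfl
theorem bPart_C0f (hα : Order.IsSuccLimit α) (H : czero ↥(Set.Iio β) (Czero α)) (u : Czero β) :
    C0f (bPart hα H u) = bFun hα H u := rfl

theorem bFun_abs_le (hα : Order.IsSuccLimit α) (H : czero ↥(Set.Iio β) (Czero α)) (u : Czero β)
    (x : Set.Iic (α * β)) : |bFun hα H u x| ≤ ‖H‖ + ‖u‖ := by
  rw [bFun]
  split
  · exact le_add_of_nonneg_of_le (norm_nonneg H) (C0_apply_le u _)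
  · refine (abs_add_le _ _).trans (add_le_add ?_ (C0_apply_le u _))
    exact (C0_apply_le _ _).trans (cz_apply_le H _)

theorem left_inv_block (hα : Order.IsSuccLimit α) (f : Czero (α * β)) :
    bPart hα (hPart hα f) (uPart f hα) = f := by
  apply C0_ext
  rintro ⟨xv, hxv⟩
  show bFun hα (hPart hα f) (uPart f hα) ⟨xv, hxv⟩ = C0f f ⟨xv, hxv⟩
  set s := xv / α with hsdef
  set r := xv % α with hrdef
  have hdm : α * s + r = xv := Ordinal.div_add_mod xv α
  have hsβ : s ≤ β := bdiv_le hα hxv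
  by_cases h0 : r = 0
  · have hxeq : α * s = xv := by rw [← hdm, h0, add_zero]
    have hx_pt : (⟨xv, hxv⟩ : Set.Iic (α * β)) = ⟨α * s, mul_le_mul_right hsβ α⟩ :=
      ord_pt_eq _ hxeq.symm _
    rw [hx_pt, bFun_at_mul hα _ _ hsβ]
    rfl
  · have hsβ' : s < β := bdiv_lt hα hxv h0
    have hrα : r < α := Ordinal.mod_lt xv (α_ne hα)
    have h1r : (1 : Ordinal) ≤ r := Ordinal.one_le_iff_ne_zero.2 h0
    have h1r' : 1 + (r - 1) = r := Ordinal.add_sub_cancel_of_le h1r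
    have htα : r - 1 ≤ α := (Ordinal.sub_le_self _ _).trans hrα.le
    have hx_pt : (⟨xv, hxv⟩ : Set.Iic (α * β)) = ⟨α * s + r, inner_le hα hsβ' hrα⟩ :=
      ord_pt_eq _ hdm.symm _
    rw [hx_pt, bFun_at_inner hα _ _ hsβ' h0 hrα]
    show C0f f ⟨(α * s + 1) + (r - 1), blk_le hα hsβ' htα⟩ -
        C0f f ⟨α * Order.succ s, blk_top_le hsβ'⟩ +
        C0f f ⟨α * Order.succ s, blk_top_le hsβ'⟩ = C0f f ⟨α * s + r, _⟩
    rw [sub_add_cancel]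
    exact C0f_congr rfl (show (α * s + 1) + (r - 1) = α * s + r by rw [add_assoc, h1r'])

theorem right_inv_block (hα : Order.IsSuccLimit α) (H : czero ↥(Set.Iio β) (Czero α))
    (u : Czero β) :
    (hPart hα (bPart hα H u), uPart (bPart hα H u) hα) = (H, u) := by
  refine Prod.ext ?_ ?_
  · apply cz_ext
    intro sd
    apply C0_ext
    rintro ⟨tv, htv⟩
    rcases lt_or_eq_of_le (show tv ≤ α from htv) with htα | htα
    · -- t < α : interior of block
      have h1t : 1 + tv < α := one_add_lt_of_isLimit hα htα
      have h1t0 : (1 : Ordinal) + tv ≠ 0 := by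
        intro h
        exact absurd ((le_self_add (a := (1 : Ordinal)) (b := tv)).trans h.le) (by norm_num)
      have hof : (α * sd.1 + 1) + tv = α * sd.1 + (1 + tv) := by rw [add_assoc]
      show C0f (bPart hα H u) ⟨(α * sd.1 + 1) + tv, blk_le hα sd.2 htα.le⟩ -
          C0f (bPart hα H u) ⟨α * Order.succ sd.1, blk_top_le sd.2⟩ =
          C0f (czf H sd) ⟨tv, htv⟩
      have e1 : (⟨(α * sd.1 + 1) + tv, blk_le hα sd.2 htα.le⟩ : Set.Iic (α * β)) =
          ⟨α * sd.1 + (1 + tv), inner_le hα sd.2 h1t⟩ := ord_pt_eq _ hof _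
      have e2 : (⟨α * Order.succ sd.1, blk_top_le sd.2⟩ : Set.Iic (α * β)) =
          ⟨α * Order.succ sd.1, mul_le_mul_right (Order.succ_le_of_lt sd.2) α⟩ := rfl
      rw [bPart_C0f, e1, e2, bFun_at_inner hα H u sd.2 h1t0 h1t,
        bFun_at_mul hα H u (Order.succ_le_of_lt sd.2)]
      have e3 : ((1 : Ordinal) + tv - 1) = tv := Ordinal.add_sub_cancel 1 tv
      have e4 : (⟨1 + tv - 1, (Ordinal.sub_le_self _ _).trans h1t.le⟩ : Set.Iic α) =
          ⟨tv, htv⟩ := Subtype.ext e3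
      have e5 : (⟨sd.1, sd.2⟩ : ↥(Set.Iio β)) = sd := rfl
      rw [e4]
      have : C0f (czf H ⟨sd.1, sd.2⟩) ⟨tv, htv⟩ = C0f (czf H sd) ⟨tv, htv⟩ := by rw [e5]
      rw [add_sub_cancel_right, this]
    · -- t = α : both endpoints coincide
      have hv : (α * sd.1 + 1) + tv = α * Order.succ sd.1 := by
        rw [htα, add_assoc, Ordinal.one_add_of_omega0_le (omega0_le_of_isSuccLimit hα),
          ← Ordinal.mul_succ]
      show C0f (bPart hα H u) ⟨(α * sd.1 + 1) + tv, blk_le hα sd.2 htα.le⟩ -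
          C0f (bPart hα H u) ⟨α * Order.succ sd.1, blk_top_le sd.2⟩ =
          C0f (czf H sd) ⟨tv, htv⟩
      have e1 : C0f (bPart hα H u) ⟨(α * sd.1 + 1) + tv, blk_le hα sd.2 htα.le⟩ =
          C0f (bPart hα H u) ⟨α * Order.succ sd.1, blk_top_le sd.2⟩ :=
        C0f_congr rfl hv
      rw [e1]
      have e2 : C0f (bPart hα H u) ⟨α * Order.succ sd.1, blk_top_le sd.2⟩ -
          C0f (bPart hα H u) ⟨α * Order.succ sd.1, blk_top_le sd.2⟩ = (0 : ℝ) := sub_self _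
      exact e2.trans ((C0f_congr (rfl : czf H sd = czf H sd) htα).trans
        (C0_zero_at_top (czf H sd))).symm
  · apply C0_ext
    rintro ⟨sv, hsv⟩
    show C0f (bPart hα H u) ⟨α * sv, mul_le_mul_right hsv α⟩ = C0f u ⟨sv, hsv⟩
    rw [bPart_C0f]
    exact bFun_at_mul hα H u hsv

/-- The block decomposition equivalence. -/
def blockEquiv (hα : Order.IsSuccLimit α) :
    Czero (α * β) ≃L[ℝ] (czero ↥(Set.Iio β) (Czero α)) × Czero β :=
  let L : Czero (α * β) ≃ₗ[ℝ] (czero ↥(Set.Iio β) (Czero α)) × Czero β :=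
  { toFun := fun f => (hPart hα f, uPart f hα)
    invFun := fun p => bPart hα p.1 p.2
    map_add' := fun f g => by
      refine Prod.ext ?_ ?_
      · apply cz_ext
        intro sd
        apply C0_ext
        intro t
        show C0f (hElem hα (f + g) sd) t = C0f (hElem hα f sd + hElem hα g sd) t
        rw [C0f_add, hElem_apply, hElem_apply, hElem_apply, C0f_add, C0f_add]
        ring
      · apply C0_ext
        intro sv
        show C0f (f + g) _ = C0f (uPart f hα + uPart g hα) sv
        rw [C0f_add, C0f_add]
        rfl
    map_smul' := fun c f => by
      refine Prod.ext ?_ ?_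
      · apply cz_ext
        intro sd
        apply C0_ext
        intro t
        show C0f (hElem hα (c • f) sd) t = C0f (c • hElem hα f sd) t
        rw [C0f_smul, hElem_apply, hElem_apply, C0f_smul, C0f_smul]
        ring
      · apply C0_ext
        intro sv
        show C0f (c • f) _ = C0f (c • uPart f hα) sv
        rw [C0f_smul, C0f_smul]
        rfl
    left_inv := left_inv_block hα
    right_inv := fun p => right_inv_block hα p.1 p.2 }
  L.toContinuousLinearEquivOfBounds 2 2
    (fun f => by
      have h1 : ‖hPart hα f‖ ≤ 2 * ‖f‖ :=
        cz_norm_le _ (by positivity) (fun sd => hElem_norm_le hα f sd)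
      have h2 : ‖uPart f hα‖ ≤ 2 * ‖f‖ := by
        refine (C0_norm_le (uPart f hα) (norm_nonneg f) (fun x => C0_apply_le f _)).trans ?_
        nlinarith [norm_nonneg f]
      calc ‖(hPart hα f, uPart f hα)‖ = max ‖hPart hα f‖ ‖uPart f hα‖ := Prod.norm_def _
        _ ≤ 2 * ‖f‖ := max_le h1 h2)
    (fun p => by
      have h1 : ‖bPart hα p.1 p.2‖ ≤ ‖p.1‖ + ‖p.2‖ :=
        C0_norm_le _ (by positivity) (fun x => bFun_abs_le hα p.1 p.2 x)
      refine h1.trans ?_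
      have := norm_fst_le p
      have := norm_snd_le p
      linarith)
end Block

-- ============ assembly ============
def czeroCast {a b : Ordinal} (h : a = b) : Czero a ≃L[ℝ] Czero b := by
  subst h; exact ContinuousLinearEquiv.refl ℝ _

theorem iio_infinite {δ : Ordinal} (hδ : Order.IsSuccLimit δ) : Infinite ↥(Set.Iio δ) := by
  refine Infinite.of_injective
    (fun n : ℕ => (⟨n, (nat_lt_omega0 n).trans_le (omega0_le_of_isSuccLimit hδ)⟩ : ↥(Set.Iio δ)))
    (fun a b hab => Nat.cast_injective (R := Ordinal) (congrArg Subtype.val hab))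

theorem option_equiv {δ : Ordinal} (hδ : Order.IsSuccLimit δ) :
    Nonempty (Option ↥(Set.Iio δ) ≃ ↥(Set.Iio δ)) := by
  have : Infinite ↥(Set.Iio δ) := iio_infinite hδ
  refine Cardinal.eq.1 ?_
  rw [Cardinal.mk_option, Cardinal.add_one_eq (Cardinal.infinite_iff.1 this)]

theorem prod_equiv {δ : Ordinal} (hδ : Order.IsSuccLimit δ) :
    Nonempty (↥(Set.Iio δ) × ↥(Set.Iio δ) ≃ ↥(Set.Iio δ)) := by
  have : Infinite ↥(Set.Iio δ) := iio_infinite hδ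
  refine Cardinal.eq.1 ?_
  simp only [Cardinal.mk_prod, Cardinal.lift_id]
  rw [Cardinal.mul_eq_self (Cardinal.infinite_iff.1 this)]

/-- absorption of one extra summand. -/
theorem absorb {δ : Ordinal} (hδ : Order.IsSuccLimit δ) (X : Type*) [NormedAddCommGroup X]
    [NormedSpace ℝ X] :
    Nonempty ((czero ↥(Set.Iio δ) X × X) ≃L[ℝ] czero ↥(Set.Iio δ) X) := by
  obtain ⟨e⟩ := option_equiv hδ
  exact ⟨czSplit.symm.trans (czReindex e)⟩

theorem main_chain (δ : Ordinal) (hδ : Order.IsSuccLimit δ) (hδp : ∀ m : ℕ, m ≠ 0 →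
    Order.IsSuccLimit (δ ^ (m : Ordinal))) :
    ∀ m : ℕ, 2 ≤ m →
      Nonempty (Czero (δ ^ (m : Ordinal)) ≃L[ℝ] czero ↥(Set.Iio δ) (Czero δ)) := by
  intro m hm
  induction m with
  | zero => omega
  | succ k ih =>
    have hcast : (δ ^ ((k + 1 : ℕ) : Ordinal)) = δ ^ (k : Ordinal) * δ := by
      rw [Ordinal.natCast_succ, Ordinal.opow_succ]
    rcases Nat.lt_or_ge k 2 with hk | hk
    · -- base case : k + 1 = 2, k = 1
      have hk1 : k = 1 := by omega
      subst hk1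
      have h1 : (δ ^ ((1 : ℕ) : Ordinal)) = δ := by
        rw [Nat.cast_one, Ordinal.opow_one]
      obtain ⟨eabs⟩ := absorb hδ (Czero δ)
      exact ⟨(czeroCast (by rw [hcast, h1])).trans ((blockEquiv hδ).trans eabs)⟩
    · -- inductive step
      obtain ⟨e1⟩ := ih hk
      obtain ⟨e2⟩ := prod_equiv hδ
      obtain ⟨eabs⟩ := absorb hδ (Czero δ)
      refine ⟨(czeroCast hcast).trans ((blockEquiv (hδp k (by omega))).trans ?_)⟩
      refine ContinuousLinearEquiv.trans ?_ eabs
      refine ContinuousLinearEquiv.prodCongr ?_ (ContinuousLinearEquiv.refl ℝ (Czero δ))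
      exact (czCongr e1).trans (czFlatten.trans (czReindex e2))


theorem statement2 (γ : Ordinal) (n : ℕ) (hn : 1 < n) :
    Nonempty (Czero (ω ^ (ω ^ γ * n)) ≃L[ℝ]
      czero (Set.Iio (ω ^ ω ^ γ)) (Czero (ω ^ ω ^ γ))) := by
  have hδ : Order.IsSuccLimit (ω ^ ω ^ γ) :=
    isSuccLimit_opow_left isSuccLimit_omega0 (opow_ne_zero γ omega0_ne_zero)
  have hδp : ∀ m : ℕ, m ≠ 0 → Order.IsSuccLimit ((ω ^ ω ^ γ) ^ (m : Ordinal)) := fun m hm =>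
    isSuccLimit_opow_left hδ (by exact_mod_cast hm)
  obtain ⟨e⟩ := main_chain (ω ^ ω ^ γ) hδ hδp n hn
  exact ⟨(czeroCast (Ordinal.opow_mul ω (ω ^ γ) n)).trans e⟩
end
end

section
/- For every infinite ordinal α, the Banach space C₀([0, α]) of continuous functions on [0, α] vanishing at α is isomorphic (linearly homeomorphic) to C([0, α]). -/
set_option synthInstance.maxHeartbeats 1000000
set_option maxHeartbeats 1000000

noncomputable section

open Ordinal Set Metric

namespace Stmt5

open Order Filter Topology

variable {α : Ordinal}

lemma succ_le_alpha (hα : ω ≤ α) {x : Ordinal} (hx : x < ω) : x + 1 ≤ α := by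
  rw [Ordinal.add_one_eq_succ]
  exact ((Ordinal.isSuccLimit_omega0.succ_lt hx).le.trans hα)

lemma succ_pred_eq {x : Ordinal} (h0 : x ≠ 0) (hx : x < ω) : Ordinal.pred x + 1 = x := by
  rw [Ordinal.add_one_eq_succ]
  suffices h : ∃ a, x = succ a by obtain ⟨a, rfl⟩ := h; rw [Ordinal.pred_succ]
  obtain ⟨n, rfl⟩ := Ordinal.lt_omega0.1 hx
  have hn : n ≠ 0 := by rintro rfl; simp at h0
  obtain ⟨m, rfl⟩ : ∃ m, n = m + 1 := ⟨n - 1, by omega⟩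
  exact ⟨(m : Ordinal), by rw [Nat.cast_succ, Ordinal.add_one_eq_succ]⟩

lemma lt_add_one' (x : Ordinal) : x < x + 1 := by
  rw [Ordinal.add_one_eq_succ]; exact lt_succ x

lemma add_one_ne_zero' (x : Ordinal) : x + 1 ≠ 0 :=
  ((zero_le (a := x)).trans_lt (lt_add_one' x)).ne'

/-- the element α -/
def ae : Set.Iic α := ⟨α, Set.self_mem_Iic⟩
/-- the element 0 -/
def ze : Set.Iic α := ⟨0, zero_le (a := α)⟩

/-- forward shift -/
def tmap (hα : ω ≤ α) (x : Set.Iic α) : Set.Iic α :=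
  if h : x.1 < ω then ⟨x.1 + 1, succ_le_alpha hα h⟩ else x

/-- backward shift -/
def smap (hα : ω ≤ α) (x : Set.Iic α) : Set.Iic α :=
  if x.1 = 0 then ae
  else if x.1 < ω then ⟨Ordinal.pred x.1, (Ordinal.pred_le_self _).trans x.2⟩ else x

lemma tmap_ae (hα : ω ≤ α) : tmap hα ae = ae := dif_neg (not_lt.2 hα)

lemma smap_ae (hα : ω ≤ α) : smap hα ae = ae := by
  rw [smap, if_neg, if_neg]
  · exact not_lt.2 hα
  · exact (Ordinal.omega0_pos.trans_le hα).ne'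

lemma smap_ze (hα : ω ≤ α) : smap hα ze = ae := if_pos rfl

lemma le_tmap (hα : ω ≤ α) (x : Set.Iic α) : x ≤ tmap hα x := by
  rw [tmap]
  split_ifs with h
  · exact (show x.1 ≤ x.1 + 1 from (lt_add_one' x.1).le)
  · exact le_rfl

lemma tmap_ne_zero (hα : ω ≤ α) (x : Set.Iic α) : (tmap hα x).1 ≠ 0 := by
  rw [tmap]
  split_ifs with h
  · exact add_one_ne_zero' x.1
  · exact (Ordinal.omega0_pos.trans_le (not_lt.1 h)).ne'

lemma smap_tmap (hα : ω ≤ α) (x : Set.Iic α) : smap hα (tmap hα x) = x := by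
  by_cases h : x.1 < ω
  · rw [tmap, dif_pos h, smap]
    have h2 : x.1 + 1 < ω := by
      rw [Ordinal.add_one_eq_succ]; exact Ordinal.isSuccLimit_omega0.succ_lt h
    rw [if_neg (add_one_ne_zero' x.1), if_pos h2]
    exact Subtype.ext (by simp)
  · rw [tmap, dif_neg h, smap, if_neg (Ordinal.omega0_pos.trans_le (not_lt.1 h)).ne', if_neg h]

lemma tmap_smap (hα : ω ≤ α) (x : Set.Iic α) (h0 : x.1 ≠ 0) : tmap hα (smap hα x) = x := by
  by_cases h : x.1 < ω
  · rw [smap, if_neg h0, if_pos h, tmap,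
      dif_pos (show Ordinal.pred x.1 < ω from (Ordinal.pred_le_self _).trans_lt h)]
    exact Subtype.ext (succ_pred_eq h0 h)
  · rw [smap, if_neg h0, if_neg h, tmap, dif_neg h]

lemma isOpen_sing (hα : ω ≤ α) {x : Set.Iic α} (hx : x.1 < ω) :
    IsOpen ({x} : Set (Set.Iic α)) := by
  rcases eq_or_ne x.1 0 with h0 | h0
  · have : ({x} : Set (Set.Iic α)) = Set.Iio ⟨x.1 + 1, succ_le_alpha hα hx⟩ := by
      ext y
      simp only [Set.mem_singleton_iff, Set.mem_Iio, Subtype.ext_iff]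
      show y.1 = x.1 ↔ y.1 < x.1 + 1
      rw [Ordinal.add_one_eq_succ, lt_succ_iff, h0, nonpos_iff_eq_zero]
    rw [this]; exact isOpen_Iio
  · have hp : Ordinal.pred x.1 ≤ α := (Ordinal.pred_le_self _).trans x.2
    have hpx : Ordinal.pred x.1 < x.1 := by
      conv_rhs => rw [← succ_pred_eq h0 hx]
      exact lt_add_one' _
    have : ({x} : Set (Set.Iic α)) =
        Set.Ioo ⟨Ordinal.pred x.1, hp⟩ ⟨x.1 + 1, succ_le_alpha hα hx⟩ := by
      ext y
      simp only [Set.mem_singleton_iff, Set.mem_Ioo, Subtype.ext_iff]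
      show y.1 = x.1 ↔ Ordinal.pred x.1 < y.1 ∧ y.1 < x.1 + 1
      constructor
      · rintro h; rw [h]; exact ⟨hpx, lt_add_one' _⟩
      · rintro ⟨h1, h2⟩
        rw [Ordinal.add_one_eq_succ, lt_succ_iff] at h2
        refine le_antisymm h2 ?_
        rw [← succ_pred_eq h0 hx, Ordinal.add_one_eq_succ, succ_le_iff]
        exact h1
    rw [this]; exact isOpen_Ioo

lemma continuousAt_isolated {X : Type*} [TopologicalSpace X] {f : Set.Iic α → X}
    {x : Set.Iic α} (h : IsOpen ({x} : Set (Set.Iic α))) : ContinuousAt f x :=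
  (tendsto_pure_nhds f x).mono_left (le_pure_iff.2 (h.mem_nhds rfl))

lemma continuous_tmap (hα : ω ≤ α) : Continuous (tmap hα) := by
  rw [continuous_iff_continuousAt]
  intro x
  rcases lt_trichotomy x.1 ω with hx | hx | hx
  · exact continuousAt_isolated (isOpen_sing hα hx)
  · have hfx : tmap hα x = x := dif_neg (by rw [hx]; exact lt_irrefl _)
    rw [ContinuousAt, hfx]
    refine tendsto_order.2 ⟨fun b hb => ?_, fun b hb => ?_⟩
    · filter_upwards [Ioi_mem_nhds hb] with y hy
      exact hy.trans_le (le_tmap hα y)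
    · filter_upwards [Iio_mem_nhds hb] with y hy
      by_cases h : y.1 < ω
      · rw [tmap]
        show (if h : y.1 < ω then (⟨y.1 + 1, succ_le_alpha hα h⟩ : Set.Iic α) else y) < b
        rw [dif_pos h]
        show y.1 + 1 < b.1
        have h1 : y.1 + 1 ≤ ω := by
          rw [Ordinal.add_one_eq_succ]; exact (Ordinal.isSuccLimit_omega0.succ_lt h).le
        exact h1.trans_lt (hx ▸ (hb : x.1 < b.1))
      · rwa [tmap, dif_neg h]
  · refine continuousAt_id.congr (Filter.eventuallyEq_of_mem (Ioi_mem_nhds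
      (show (⟨ω, hα⟩ : Set.Iic α) < x from hx)) fun y hy => ?_)
    have h2 : ω < y.1 := hy
    rw [id_eq, tmap, dif_neg (not_lt.2 h2.le)]

lemma continuous_smap (hα : ω ≤ α) : Continuous (smap hα) := by
  rw [continuous_iff_continuousAt]
  intro x
  rcases lt_trichotomy x.1 ω with hx | hx | hx
  · exact continuousAt_isolated (isOpen_sing hα hx)
  · have hfx : smap hα x = x := by
      rw [smap, if_neg (by rw [hx]; exact Ordinal.omega0_ne_zero),
        if_neg (by rw [hx]; exact lt_irrefl _)]
    rw [ContinuousAt, hfx]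
    refine tendsto_order.2 ⟨fun b hb => ?_, fun b hb => ?_⟩
    · have hb' : b.1 < ω := hx ▸ (hb : b.1 < x.1)
      have hbs : b.1 + 1 < ω := by
        rw [Ordinal.add_one_eq_succ]; exact Ordinal.isSuccLimit_omega0.succ_lt hb'
      filter_upwards [Ioi_mem_nhds (show (⟨b.1 + 1, succ_le_alpha hα hb'⟩ : Set.Iic α) < x from
        show b.1 + 1 < x.1 from hx ▸ hbs)] with y hy
      have hy' : b.1 + 1 < y.1 := hy
      have h0 : y.1 ≠ 0 := by
        intro h; rw [h] at hy'
        exact absurd hy' (not_lt.2 zero_le)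
      show b.1 < (smap hα y).1
      by_cases h : y.1 < ω
      · rw [smap, if_neg h0, if_pos h]
        show b.1 < Ordinal.pred y.1
        have : b.1 + 1 < Ordinal.pred y.1 + 1 := by rw [succ_pred_eq h0 h]; exact hy'
        simpa only [Ordinal.add_one_eq_succ, succ_lt_succ_iff] using this
      · rw [smap, if_neg h0, if_neg h]
        exact (lt_add_one' b.1).trans hy'
    · have h0x : (⟨0, zero_le (a := α)⟩ : Set.Iic α) < x :=
        show (0 : Ordinal) < x.1 from hx ▸ Ordinal.omega0_pos
      filter_upwards [Ioi_mem_nhds h0x, Iio_mem_nhds hb] with y hy1 hy2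
      have h0 : y.1 ≠ 0 := (show (0 : Ordinal) < y.1 from hy1).ne'
      show (smap hα y).1 < b.1
      by_cases h : y.1 < ω
      · rw [smap, if_neg h0, if_pos h]
        exact (Ordinal.pred_le_self _).trans_lt (hy2 : y.1 < b.1)
      · rw [smap, if_neg h0, if_neg h]
        exact (hy2 : y.1 < b.1)
  · refine continuousAt_id.congr (Filter.eventuallyEq_of_mem (Ioi_mem_nhds
      (show (⟨ω, hα⟩ : Set.Iic α) < x from hx)) fun y hy => ?_)
    have hy' : ω < y.1 := hy
    rw [id_eq, smap, if_neg (Ordinal.omega0_pos.trans hy').ne', if_neg (not_lt.2 hy'.le)]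

lemma setOf_eq_zero : {x : Set.Iic α | x.1 = 0} = {(ze : Set.Iic α)} := by
  ext y; simp [ze, Subtype.ext_iff]

/-- indicator of nonzero -/
def chi (hα : ω ≤ α) : C(Set.Iic α, ℝ) :=
  ⟨fun x => if x.1 = 0 then 0 else 1, by
    refine continuous_if (fun a ha => absurd ha ?_) continuous_const.continuousOn
      continuous_const.continuousOn
    rw [setOf_eq_zero,
      (IsClopen.frontier_eq ⟨isClosed_singleton, isOpen_sing hα Ordinal.omega0_pos⟩)]
    exact Set.notMem_empty a⟩

lemma chi_zero (hα : ω ≤ α) {x : Set.Iic α} (h : x.1 = 0) : chi hα x = 0 := if_pos h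
lemma chi_one (hα : ω ≤ α) {x : Set.Iic α} (h : x.1 ≠ 0) : chi hα x = 1 := if_neg h

def TCm (hα : ω ≤ α) : C(Set.Iic α, Set.Iic α) := ⟨tmap hα, continuous_tmap hα⟩
def SCm (hα : ω ≤ α) : C(Set.Iic α, Set.Iic α) := ⟨smap hα, continuous_smap hα⟩

def fwdC (hα : ω ≤ α) (g : C(Set.Iic α, ℝ)) : C(Set.Iic α, ℝ) :=
  g.comp (TCm hα) + g ze • (1 : C(Set.Iic α, ℝ))

def bwdC (hα : ω ≤ α) (g : C(Set.Iic α, ℝ)) : C(Set.Iic α, ℝ) :=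
  g.comp (SCm hα) - g ae • chi hα

lemma fwd_apply (hα : ω ≤ α) (g : C(Set.Iic α, ℝ)) (x : Set.Iic α) :
    fwdC hα g x = g (tmap hα x) + g ze := by
  simp [fwdC, TCm]

lemma bwd_apply (hα : ω ≤ α) (g : C(Set.Iic α, ℝ)) (x : Set.Iic α) :
    bwdC hα g x = g (smap hα x) - g ae * chi hα x := by
  simp [bwdC, SCm]

lemma bwd_mem (hα : ω ≤ α) (g : C(Set.Iic α, ℝ)) : bwdC hα g ∈ CzeroSub α := by
  show bwdC hα g ⟨α, Set.self_mem_Iic⟩ = 0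
  rw [show (⟨α, Set.self_mem_Iic⟩ : Set.Iic α) = ae from rfl, bwd_apply, smap_ae,
    chi_one hα (show (ae : Set.Iic α).1 ≠ 0 from (Ordinal.omega0_pos.trans_le hα).ne')]
  ring

lemma bwd_fwd (hα : ω ≤ α) (g : C(Set.Iic α, ℝ)) (hg : g ae = 0) :
    bwdC hα (fwdC hα g) = g := by
  ext x
  rw [bwd_apply, fwd_apply, fwd_apply, tmap_ae, hg, zero_add]
  rcases eq_or_ne x.1 0 with h0 | h0
  · rw [chi_zero hα h0, show x = ze from Subtype.ext h0, smap_ze, tmap_ae, hg]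
    ring
  · rw [chi_one hα h0, mul_one, tmap_smap hα x h0]
    ring

lemma fwd_bwd (hα : ω ≤ α) (g : C(Set.Iic α, ℝ)) : fwdC hα (bwdC hα g) = g := by
  ext x
  rw [fwd_apply, bwd_apply, bwd_apply, smap_ze, smap_tmap,
    chi_zero hα (show (ze : Set.Iic α).1 = 0 from rfl),
    chi_one hα (tmap_ne_zero hα x)]
  ring

lemma fwd_norm (hα : ω ≤ α) (g : C(Set.Iic α, ℝ)) : ‖fwdC hα g‖ ≤ 2 * ‖g‖ := by
  refine (ContinuousMap.norm_le _ (by positivity)).2 fun x => ?_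
  rw [fwd_apply]
  calc ‖g (tmap hα x) + g ze‖ ≤ ‖g (tmap hα x)‖ + ‖g ze‖ := norm_add_le _ _
    _ ≤ ‖g‖ + ‖g‖ := add_le_add (g.norm_coe_le_norm _) (g.norm_coe_le_norm _)
    _ = 2 * ‖g‖ := by ring

lemma bwd_norm (hα : ω ≤ α) (g : C(Set.Iic α, ℝ)) : ‖bwdC hα g‖ ≤ 2 * ‖g‖ := by
  refine (ContinuousMap.norm_le _ (by positivity)).2 fun x => ?_
  rw [bwd_apply]
  have hchi : ‖chi hα x‖ ≤ 1 := by
    rcases eq_or_ne x.1 0 with h | h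
    · rw [chi_zero hα h]; simp
    · rw [chi_one hα h]; simp
  calc ‖g (smap hα x) - g ae * chi hα x‖
      ≤ ‖g (smap hα x)‖ + ‖g ae * chi hα x‖ := norm_sub_le _ _
    _ ≤ ‖g‖ + ‖g‖ * 1 := by
        refine add_le_add (g.norm_coe_le_norm _) ?_
        rw [norm_mul]
        exact mul_le_mul (g.norm_coe_le_norm _) hchi (norm_nonneg _) (norm_nonneg _)
    _ = 2 * ‖g‖ := by ring

def lequiv (hα : ω ≤ α) : Czero α ≃ₗ[ℝ] C(Set.Iic α, ℝ) where
  toFun f := fwdC hα f.1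
  map_add' f g := by
    ext x
    simp only [Submodule.coe_add, fwd_apply, ContinuousMap.add_apply]
    ring
  map_smul' c f := by
    ext x
    simp only [SetLike.val_smul, fwd_apply, ContinuousMap.smul_apply, RingHom.id_apply,
      Pi.smul_apply]
    rw [smul_add]
  invFun g := ⟨bwdC hα g, bwd_mem hα g⟩
  left_inv f := Subtype.ext (bwd_fwd hα f.1 f.2)
  right_inv g := fwd_bwd hα g

def cequiv (hα : ω ≤ α) : Czero α ≃L[ℝ] C(Set.Iic α, ℝ) :=
  { lequiv hα with
    continuous_toFun := AddMonoidHomClass.continuous_of_bound (lequiv hα).toLinearMap 2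
      fun f => fwd_norm hα f.1
    continuous_invFun := AddMonoidHomClass.continuous_of_bound (lequiv hα).symm.toLinearMap 2
      fun g => bwd_norm hα g }

end Stmt5


theorem statement5 (α : Ordinal) (hα : ω ≤ α) :
    Nonempty (Czero α ≃L[ℝ] C(Set.Iic α, ℝ)) := by
  exact ⟨Stmt5.cequiv hα⟩
end
end

section
/- Let X be an Asplund space. If there exist an ordinal γ and ε > 0 such that Sz(X, ε) > ω^γ, then Sz(X) ≥ ω^{γ+1}. Consequently, Sz(X) = ω^α for some ordinal α. -/
set_option synthInstance.maxHeartbeats 1000000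
set_option maxHeartbeats 1000000

noncomputable section

open Ordinal Set Metric

section Aux

variable {X : Type*} [NormedAddCommGroup X] [NormedSpace ℝ X]

open NormedSpace

theorem szIter_zero (ε : ℝ) (B : Set (StrongDual ℝ X)) : szIter X ε B 0 = B := by
  unfold szIter; exact Ordinal.limitRecOn_zero _ _ _

theorem szIter_succ (ε : ℝ) (B : Set (StrongDual ℝ X)) (β : Ordinal) :
    szIter X ε B (Order.succ β) = szDeriv X ε (szIter X ε B β) := by
  unfold szIter; exact Ordinal.limitRecOn_succ _ _ _ _

theorem szIter_limit (ε : ℝ) (B : Set (StrongDual ℝ X)) {β : Ordinal} (h : Order.IsSuccLimit β) :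
    szIter X ε B β = ⋂ (σ : Ordinal.{0}) (_ : σ < β), szIter X ε B σ := by
  unfold szIter; exact Ordinal.limitRecOn_limit _ _ _ _ h

theorem szDeriv_subset (ε : ℝ) (A : Set (StrongDual ℝ X)) : szDeriv X ε A ⊆ A :=
  fun _ hx => hx.1

theorem szDeriv_mono {ε ε' : ℝ} {A B : Set (StrongDual ℝ X)} (hB : Bornology.IsBounded B) (hAB : A ⊆ B)
    (hε : ε' ≤ ε) : szDeriv X ε A ⊆ szDeriv X ε' B := by
  rintro x ⟨hxA, hx⟩
  refine ⟨hAB hxA, fun V hV hxV => ?_⟩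
  calc ε' ≤ ε := hε
    _ < Metric.diam (A ∩ V) := hx V hV hxV
    _ ≤ Metric.diam (B ∩ V) :=
      Metric.diam_mono (Set.inter_subset_inter_left _ hAB) (hB.subset Set.inter_subset_left)

theorem szIter_subset (ε : ℝ) (B : Set (StrongDual ℝ X)) (β : Ordinal) : szIter X ε B β ⊆ B := by
  induction β using Ordinal.limitRecOn with
  | zero => rw [szIter_zero]
  | add_one β ih => rw [Ordinal.add_one_eq_succ, szIter_succ]; exact (szDeriv_subset _ _).trans ih
  | limit β hβ ih =>
      rw [szIter_limit _ _ hβ]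
      intro x hx
      have h0 := Set.mem_iInter₂.1 hx 0 hβ.pos
      rw [szIter_zero] at h0
      exact h0

theorem szIter_mono {ε ε' : ℝ} {A B : Set (StrongDual ℝ X)} (hB : Bornology.IsBounded B) (hAB : A ⊆ B)
    (hε : ε' ≤ ε) (β : Ordinal) : szIter X ε A β ⊆ szIter X ε' B β := by
  induction β using Ordinal.limitRecOn with
  | zero => rw [szIter_zero, szIter_zero]; exact hAB
  | add_one β ih =>
      rw [Ordinal.add_one_eq_succ]
      rw [szIter_succ, szIter_succ]
      exact szDeriv_mono (hB.subset (szIter_subset _ _ _)) ih hε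
  | limit β hβ ih =>
      rw [szIter_limit _ _ hβ, szIter_limit _ _ hβ]
      exact Set.iInter₂_mono fun σ hσ => ih σ hσ

theorem szIter_anti {ε : ℝ} {B : Set (StrongDual ℝ X)} (β : Ordinal) :
    ∀ β' ≤ β, szIter X ε B β ⊆ szIter X ε B β' := by
  induction β using Ordinal.limitRecOn with
  | zero => intro β' hβ'; rw [nonpos_iff_eq_zero.1 hβ']
  | add_one β ih =>
      rw [Ordinal.add_one_eq_succ]
      intro β' hβ'
      rcases eq_or_lt_of_le hβ' with rfl | h
      · exact subset_rfl
      · rw [szIter_succ]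
        exact (szDeriv_subset _ _).trans (ih β' (Order.lt_succ_iff.1 h))
  | limit β hβ ih =>
      intro β' hβ'
      rcases eq_or_lt_of_le hβ' with rfl | h
      · exact subset_rfl
      · rw [szIter_limit _ _ hβ]
        exact Set.iInter₂_subset β' h

theorem szIter_add (ε : ℝ) (B : Set (StrongDual ℝ X)) (α β : Ordinal) :
    szIter X ε B (α + β) = szIter X ε (szIter X ε B α) β := by
  induction β using Ordinal.limitRecOn with
  | zero => rw [add_zero, szIter_zero]
  | add_one β ih => rw [Ordinal.add_one_eq_succ, Ordinal.add_succ, szIter_succ, szIter_succ, ih]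
  | limit β hβ ih =>
      rw [szIter_limit _ _ (Ordinal.isSuccLimit_add α hβ), szIter_limit _ _ hβ]
      apply Set.Subset.antisymm
      · intro x hx
        apply Set.mem_iInter₂.2
        intro τ hτ
        rw [← ih τ hτ]
        exact Set.mem_iInter₂.1 hx (α + τ) ((add_lt_add_iff_left α).2 hτ)
      · intro x hx
        apply Set.mem_iInter₂.2
        intro σ hσ
        rcases le_or_gt α σ with hc | hc
        · have hlt : σ - α < β := by
            rwa [← add_lt_add_iff_left α, Ordinal.add_sub_cancel_of_le hc]
          have h1 := Set.mem_iInter₂.1 hx (σ - α) hlt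
          rw [← ih _ hlt, Ordinal.add_sub_cancel_of_le hc] at h1
          exact h1
        · have h1 := Set.mem_iInter₂.1 hx 0 hβ.pos
          rw [← ih 0 hβ.pos, add_zero] at h1
          exact szIter_anti α σ hc.le h1

theorem affine_bijective {c : ℝ} (hc : c ≠ 0) (y : StrongDual ℝ X) :
    Function.Bijective (fun z : StrongDual ℝ X => y + c • z) := by
  constructor
  · intro a b h
    simp only [add_right_inj] at h
    exact smul_right_injective _ hc h
  · intro z
    exact ⟨c⁻¹ • (z - y), by simp [smul_smul, mul_inv_cancel₀ hc]⟩

theorem isWstarOpen_affine {c : ℝ} (hc : c ≠ 0) (y : StrongDual ℝ X) {V : Set (StrongDual ℝ X)} :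
    IsWstarOpen X ((fun z : StrongDual ℝ X => y + c • z) '' V) ↔ IsWstarOpen X V := by
  unfold IsWstarOpen
  have h1 : StrongDual.toWeakDual '' ((fun z : StrongDual ℝ X => y + c • z) '' V)
      = (fun w : WeakDual ℝ X => StrongDual.toWeakDual y + c • w) '' (StrongDual.toWeakDual '' V) := by
    rw [Set.image_image, Set.image_image]
    apply Set.image_congr'
    intro z
    simp [map_add, map_smul]
  rw [h1]
  have h2 : (fun w : WeakDual ℝ X => StrongDual.toWeakDual y + c • w)
      = ((Homeomorph.smulOfNeZero c hc).trans
          (Homeomorph.addLeft (StrongDual.toWeakDual (𝕜 := ℝ) (E := X) y))) := by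
    ext w
    rfl
  rw [h2]
  exact Homeomorph.isOpen_image _

theorem ediam_affine {c : ℝ} (hc : 0 < c) (y : StrongDual ℝ X) (S : Set (StrongDual ℝ X)) :
    EMetric.diam ((fun z : StrongDual ℝ X => y + c • z) '' S) = ENNReal.ofReal c * EMetric.diam S := by
  have key : ∀ a b : StrongDual ℝ X, edist (y + c • a) (y + c • b) = ENNReal.ofReal c * edist a b := by
    intro a b
    have e : c • a - c • b = c • (a - b) := by ext x; simp only [ContinuousLinearMap.sub_apply, ContinuousLinearMap.coe_smul', Pi.smul_apply, smul_eq_mul]; ring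
    rw [edist_dist, edist_dist, dist_add_left, dist_eq_norm, dist_eq_norm, e, norm_smul, Real.norm_of_nonneg hc.le,
      ENNReal.ofReal_mul hc.le]
  have hc0 : ENNReal.ofReal c ≠ 0 := (ENNReal.ofReal_pos.2 hc).ne'
  have hct : ENNReal.ofReal c ≠ ⊤ := ENNReal.ofReal_ne_top
  apply le_antisymm
  · apply EMetric.diam_le
    rintro _ ⟨a, ha, rfl⟩ _ ⟨b, hb, rfl⟩
    rw [key]
    exact mul_le_mul_right (EMetric.edist_le_diam_of_mem ha hb) _
  · have h2 : EMetric.diam S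
        ≤ (ENNReal.ofReal c)⁻¹ * EMetric.diam ((fun z : StrongDual ℝ X => y + c • z) '' S) := by
      apply EMetric.diam_le
      intro a ha b hb
      have h3 := EMetric.edist_le_diam_of_mem
        (Set.mem_image_of_mem (fun z : StrongDual ℝ X => y + c • z) ha)
        (Set.mem_image_of_mem (fun z : StrongDual ℝ X => y + c • z) hb)
      rw [key] at h3
      calc edist a b = (ENNReal.ofReal c)⁻¹ * (ENNReal.ofReal c * edist a b) := by
            rw [← mul_assoc, ENNReal.inv_mul_cancel hc0 hct, one_mul]
        _ ≤ _ := mul_le_mul_right h3 _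
    calc ENNReal.ofReal c * EMetric.diam S
        ≤ ENNReal.ofReal c * ((ENNReal.ofReal c)⁻¹
            * EMetric.diam ((fun z : StrongDual ℝ X => y + c • z) '' S)) := mul_le_mul_right h2 _
      _ = _ := by rw [← mul_assoc, ENNReal.mul_inv_cancel hc0 hct, one_mul]

theorem diam_affine {c : ℝ} (hc : 0 < c) (y : StrongDual ℝ X) (S : Set (StrongDual ℝ X)) :
    Metric.diam ((fun z : StrongDual ℝ X => y + c • z) '' S) = c * Metric.diam S := by
  have h := ediam_affine hc y S
  unfold EMetric.diam at h
  rw [Metric.diam, Metric.diam, h, ENNReal.toReal_mul,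
    ENNReal.toReal_ofReal hc.le]

theorem szDeriv_affine {c : ℝ} (hc : 0 < c) (y : StrongDual ℝ X) (ε : ℝ) (B : Set (StrongDual ℝ X)) :
    szDeriv X (c * ε) ((fun z : StrongDual ℝ X => y + c • z) '' B)
      = (fun z : StrongDual ℝ X => y + c • z) '' szDeriv X ε B := by
  have hbij := affine_bijective (X := X) hc.ne' y
  ext x
  constructor
  · rintro ⟨⟨a, haB, rfl⟩, hx⟩
    refine ⟨a, ⟨haB, fun V hV haV => ?_⟩, rfl⟩
    have h1 : IsWstarOpen X ((fun z : StrongDual ℝ X => y + c • z) '' V) :=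
      (isWstarOpen_affine hc.ne' y).2 hV
    have h2 := hx _ h1 (Set.mem_image_of_mem _ haV)
    rw [← Set.image_inter hbij.1, diam_affine hc] at h2
    exact (mul_lt_mul_iff_right₀ hc).1 h2
  · rintro ⟨a, ⟨haB, ha⟩, rfl⟩
    refine ⟨Set.mem_image_of_mem _ haB, fun V hV hTaV => ?_⟩
    have hV' : V = (fun z : StrongDual ℝ X => y + c • z) '' ((fun z : StrongDual ℝ X => y + c • z) ⁻¹' V) :=
      (Set.image_preimage_eq V hbij.2).symm
    have hopen : IsWstarOpen X ((fun z : StrongDual ℝ X => y + c • z) ⁻¹' V) := by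
      rw [hV'] at hV
      exact (isWstarOpen_affine hc.ne' y).1 hV
    have h3 := ha _ hopen hTaV
    rw [hV', ← Set.image_inter hbij.1, diam_affine hc]
    exact (mul_lt_mul_iff_right₀ hc).2 h3

theorem szIter_affine {c : ℝ} (hc : 0 < c) (y : StrongDual ℝ X) (ε : ℝ) (B : Set (StrongDual ℝ X))
    (β : Ordinal) :
    szIter X (c * ε) ((fun z : StrongDual ℝ X => y + c • z) '' B) β
      = (fun z : StrongDual ℝ X => y + c • z) '' szIter X ε B β := by
  induction β using Ordinal.limitRecOn with
  | zero => rw [szIter_zero, szIter_zero]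
  | add_one β ih => rw [Ordinal.add_one_eq_succ, szIter_succ, szIter_succ, ih, szDeriv_affine hc]
  | limit β hβ ih =>
      rw [szIter_limit _ _ hβ, szIter_limit _ _ hβ,
        Set.image_iInter₂ (affine_bijective hc.ne' y)]
      exact Set.iInter₂_congr ih

theorem lt_SzE (hX : SzDefined X) {ε : ℝ} (hε : 0 < ε) {β : Ordinal}
    (h : szIter X ε (Metric.closedBall (0 : StrongDual ℝ X) 1) β ≠ ∅) : β < SzE X ε := by
  obtain ⟨β₀, hβ₀⟩ := hX ε hε
  have hle : Order.succ β ≤ SzE X ε := by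
    apply le_csInf ⟨β₀, hβ₀⟩
    intro b hb
    rw [Order.succ_le_iff]
    by_contra hcon
    push_neg at hcon
    have hsub : szIter X ε (Metric.closedBall (0 : StrongDual ℝ X) 1) β ⊆ (∅ : Set (StrongDual ℝ X)) :=
      hb ▸ szIter_anti β b hcon
    exact h (Set.subset_empty_iff.1 hsub)
  exact (Order.lt_succ β).trans_le hle

theorem key_claim (hX : SzDefined X) {γ : Ordinal} {ε : ℝ} (hε : 0 < ε)
    (hne : szIter X ε (Metric.closedBall (0 : StrongDual ℝ X) 1) (ω ^ γ) ≠ ∅) :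
    ∀ n : ℕ, ∃ ε' : ℝ, 0 < ε' ∧
      szIter X ε' (Metric.closedBall (0 : StrongDual ℝ X) 1) (ω ^ γ * n) ≠ ∅ := by
  set B : Set (StrongDual ℝ X) := Metric.closedBall 0 1 with hBdef
  have hB : Bornology.IsBounded B := Metric.isBounded_closedBall
  obtain ⟨x₀, hx₀⟩ := Set.nonempty_iff_ne_empty.2 hne
  have hx₀B : ‖x₀‖ ≤ 1 := by
    have := szIter_subset ε B (ω ^ γ) hx₀
    rwa [hBdef, mem_closedBall_zero_iff] at this
  -- the map T z = (1/2) • x₀ + (1/2) • z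
  set T : StrongDual ℝ X → StrongDual ℝ X := fun z => (2⁻¹ : ℝ) • x₀ + (2⁻¹ : ℝ) • z with hTdef
  have hhalf : (0 : ℝ) < 2⁻¹ := by norm_num
  -- T '' B is contained in the ω^γ-th derived set at level ε/2
  have hTB : T '' B ⊆ szIter X (2⁻¹ * ε) B (ω ^ γ) := by
    rintro _ ⟨u, huB, rfl⟩
    have huB' : ‖u‖ ≤ 1 := by rwa [hBdef, mem_closedBall_zero_iff] at huB
    -- S z = (1/2) • u + (1/2) • z maps B into B and x₀ to T u
    have hSB : (fun z : StrongDual ℝ X => (2⁻¹ : ℝ) • u + (2⁻¹ : ℝ) • z) '' B ⊆ B := by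
      rintro _ ⟨z, hzB, rfl⟩
      have hz' : ‖z‖ ≤ 1 := by rwa [hBdef, mem_closedBall_zero_iff] at hzB
      rw [hBdef, mem_closedBall_zero_iff]
      calc ‖(2⁻¹ : ℝ) • u + (2⁻¹ : ℝ) • z‖ ≤ ‖(2⁻¹ : ℝ) • u‖ + ‖(2⁻¹ : ℝ) • z‖ := norm_add_le _ _
        _ = 2⁻¹ * ‖u‖ + 2⁻¹ * ‖z‖ := by
            rw [norm_smul, norm_smul, Real.norm_of_nonneg hhalf.le]
        _ ≤ 2⁻¹ * 1 + 2⁻¹ * 1 := by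
            gcongr
        _ = 1 := by norm_num
    have h1 : (2⁻¹ : ℝ) • u + (2⁻¹ : ℝ) • x₀
        ∈ szIter X (2⁻¹ * ε) ((fun z : StrongDual ℝ X => (2⁻¹ : ℝ) • u + (2⁻¹ : ℝ) • z) '' B)
          (ω ^ γ) := by
      rw [szIter_affine hhalf ((2⁻¹ : ℝ) • u) ε B (ω ^ γ)]
      exact Set.mem_image_of_mem _ hx₀
    have h2 := szIter_mono (ε := 2⁻¹ * ε) hB hSB le_rfl (ω ^ γ) h1
    rwa [add_comm] at h2
  intro n
  induction n with
  | zero =>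
      refine ⟨ε, hε, ?_⟩
      rw [Nat.cast_zero, mul_zero, szIter_zero]
      exact Set.nonempty_iff_ne_empty.1 ⟨0, by simp [hBdef]⟩
  | succ n ih =>
      obtain ⟨ε', hε', hne'⟩ := ih
      refine ⟨2⁻¹ * min ε ε', by positivity, ?_⟩
      set δ : ℝ := 2⁻¹ * min ε ε' with hδdef
      obtain ⟨z₀, hz₀⟩ := Set.nonempty_iff_ne_empty.2 hne'
      -- decompose the ordinal
      have hord : ω ^ γ * ((n : Ordinal) + 1) = ω ^ γ + ω ^ γ * n := by
        have e1 : ((n : Ordinal) + 1) = 1 + (n : Ordinal) := by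
          norm_cast
          omega
        rw [e1, mul_add, mul_one]
      have hstep : T z₀ ∈ szIter X δ B (ω ^ γ * ((n : Ordinal) + 1)) := by
        rw [hord, szIter_add]
        -- T '' B ⊆ szIter δ B (ω^γ)
        have hTB' : T '' B ⊆ szIter X δ B (ω ^ γ) :=
          hTB.trans (szIter_mono hB subset_rfl
            (by rw [hδdef]; gcongr; exact min_le_left _ _) _)
        have h1 : T z₀ ∈ szIter X (2⁻¹ * ε') (T '' B) (ω ^ γ * n) := by
          rw [hTdef, szIter_affine hhalf ((2⁻¹ : ℝ) • x₀) ε' B (ω ^ γ * n)]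
          exact Set.mem_image_of_mem _ hz₀
        have h2 : szIter X (2⁻¹ * ε') (T '' B) (ω ^ γ * n)
            ⊆ szIter X δ (T '' B) (ω ^ γ * n) :=
          szIter_mono (hB.subset (hTB.trans (szIter_subset _ _ _))) subset_rfl
            (by rw [hδdef]; gcongr; exact min_le_right _ _) _
        have h3 : szIter X δ (T '' B) (ω ^ γ * n)
            ⊆ szIter X δ (szIter X δ B (ω ^ γ)) (ω ^ γ * n) :=
          szIter_mono (hB.subset (szIter_subset _ _ _)) hTB' le_rfl _
        exact h3 (h2 h1)
      have : ((n : Ordinal) + 1) = ((n + 1 : ℕ) : Ordinal) := by norm_cast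
      rw [← this]
      exact Set.nonempty_iff_ne_empty.1 ⟨T z₀, hstep⟩

end Aux

theorem statement9 (X : Type*) [NormedAddCommGroup X] [NormedSpace ℝ X] [CompleteSpace X]
    (hX : SzDefined X) :
    (∀ (γ : Ordinal) (ε : ℝ), 0 < ε → ω ^ γ < SzE X ε → ω ^ (γ + 1) ≤ Sz X) ∧
    ∃ a : Ordinal, Sz X = ω ^ a := by
  have part1 : ∀ (γ : Ordinal) (ε : ℝ), 0 < ε → ω ^ γ < SzE X ε → ω ^ (γ + 1) ≤ Sz X := by
    intro γ ε hε hlt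
    have hne : szIter X ε (Metric.closedBall (0 : StrongDual ℝ X) 1) (ω ^ γ) ≠ ∅ := by
      intro h
      have hle : SzE X ε ≤ ω ^ γ := by
        rw [SzE]
        exact csInf_le' h
      exact absurd hle hlt.not_ge
    have hclaim := key_claim hX hε hne
    rw [Ordinal.add_one_eq_succ, Ordinal.opow_succ]
    apply le_of_forall_lt
    intro c hc
    obtain ⟨c', hc', hcc⟩ := (Ordinal.lt_mul_iff_of_isSuccLimit Ordinal.isSuccLimit_omega0).1 hc
    obtain ⟨n, rfl⟩ := Ordinal.lt_omega0.1 hc'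
    obtain ⟨ε', hε', hne'⟩ := hclaim n
    have h1 : ω ^ γ * n < SzE X ε' := lt_SzE hX hε' hne'
    have h2 : SzE X ε' ≤ Sz X :=
      Ordinal.le_iSup (fun εp : {ε : ℝ // 0 < ε} => SzE X εp.1) ⟨ε', hε'⟩
    exact (hcc.trans h1).trans_le h2
  refine ⟨part1, Ordinal.log ω (Sz X), ?_⟩
  have hSz0 : Sz X ≠ 0 := by
    have h0 : (0 : Ordinal) < SzE X 1 := by
      apply lt_SzE hX one_pos
      rw [szIter_zero]
      exact Set.nonempty_iff_ne_empty.1 ⟨0, by simp⟩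
    have hle : SzE X 1 ≤ Sz X :=
      Ordinal.le_iSup (fun εp : {ε : ℝ // 0 < ε} => SzE X εp.1) ⟨1, one_pos⟩
    exact (h0.trans_le hle).ne'
  apply le_antisymm ?_ (Ordinal.opow_log_le_self ω hSz0)
  by_contra hcon
  push_neg at hcon
  obtain ⟨⟨ε, hε⟩, hlt⟩ := Ordinal.lt_iSup_iff.1 hcon
  have := part1 (Ordinal.log ω (Sz X)) ε hε hlt
  rw [Ordinal.add_one_eq_succ] at this
  exact absurd (Ordinal.lt_opow_succ_log_self Ordinal.one_lt_omega0 (Sz X)) this.not_gt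
end
end
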